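/- arXiv:2009.08222 — 7 statements merged into one kernel-verified Lean document; each statement's English description precedes it below -/
import Mathlib

section
/- Let H be a positive integer with Zeckendorf expansion H = F_{m_0} + F_{m_1} + ... + F_{m_k}. If k ≥ 1, then R(H) = a_k·⌊m_k/2⌋ − ε_k·a_{k−1}; if k = 0, then R(H) = ⌊m_0/2⌋. -/
open scoped BigOperators
open Filter Topology

/-- A natural number is a Fibonacci number, i.e. equals `F m` for some `m ≥ 1`
(with `F 1 = F 2 = 1`). -/
def IsFibNum (x : ℕ) : Prop := ∃ m : ℕ, 0 < m ∧ Nat.fib m = x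

/-- `R n` counts the partitions of `n` into distinct Fibonacci numbers:
the number of finite sets of Fibonacci numbers with sum `n` (so `R 0 = 1`). -/
noncomputable def R (n : ℕ) : ℕ :=
  Nat.card {S : Finset ℕ // (∀ x ∈ S, IsFibNum x) ∧ (∑ x ∈ S, x) = n}

/-- The summatory function `A H = ∑_{n=0}^{H} R n`. -/
noncomputable def A (H : ℕ) : ℕ := ∑ n ∈ Finset.range (H + 1), R n


/-- Count of subsets of `Icc 2 p` whose fib-sum is `T`. -/
def Nn (p T : ℕ) : ℕ :=
  ((Finset.Icc 2 p).powerset.filter fun S => (∑ j ∈ S, Nat.fib j) = T).card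

lemma sum_Icc_fib : ∀ p, 1 ≤ p → (∑ j ∈ Finset.Icc 2 p, Nat.fib j) + 2 = Nat.fib (p + 2)
  | 1, _ => by decide
  | (p+2), _ => by
    have h1 : (1:ℕ) ≤ p + 1 := by omega
    have ih := sum_Icc_fib (p+1) h1
    have hins : Finset.Icc 2 (p+2) = insert (p+2) (Finset.Icc 2 (p+1)) := by
      exact (Finset.insert_Icc_right_eq_Icc_add_one (a := 2) (b := p + 1) (by omega)).symm
    rw [hins, Finset.sum_insert (by simp)]
    have e2 : Nat.fib (p+2+2) = Nat.fib (p+2) + Nat.fib (p+1+2) := Nat.fib_add_two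
    omega

lemma Nn_eq_zero {p T : ℕ} (hp : 1 ≤ p) (hT : Nat.fib (p + 2) < T + 2) : Nn p T = 0 := by
  rw [Nn, Finset.card_eq_zero, Finset.filter_eq_empty_iff]
  intro S hS
  rw [Finset.mem_powerset] at hS
  have : (∑ j ∈ S, Nat.fib j) ≤ ∑ j ∈ Finset.Icc 2 p, Nat.fib j :=
    Finset.sum_le_sum_of_subset hS
  have := sum_Icc_fib p hp
  omega

lemma Nn_split (p T : ℕ) (hp : 1 ≤ p) :
    Nn (p+1) T = Nn p T + (if Nat.fib (p+1) ≤ T then Nn p (T - Nat.fib (p+1)) else 0) := by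
  classical
  have hins : Finset.Icc 2 (p+1) = insert (p+1) (Finset.Icc 2 p) := by
    rw [← Finset.insert_Icc_right_eq_Icc_add_one (by omega)]
  have hnot : (p+1) ∉ Finset.Icc 2 p := by simp
  rw [Nn, hins, Finset.powerset_insert, Finset.filter_union]
  rw [Finset.card_union_of_disjoint]
  · congr 1
    rw [Finset.filter_image, Finset.card_image_of_injOn]
    · by_cases hle : Nat.fib (p+1) ≤ T
      · rw [if_pos hle]
        rw [Nn]
        congr 1
        apply Finset.filter_congr
        intro S hS
        rw [Finset.mem_powerset] at hS
        have hnS : (p+1) ∉ S := fun h => hnot (hS h)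
        rw [Finset.sum_insert hnS]
        constructor
        · intro h; omega
        · intro h; omega
      · rw [if_neg hle]
        rw [Finset.card_eq_zero, Finset.filter_eq_empty_iff]
        intro S hS
        rw [Finset.mem_powerset] at hS
        have hnS : (p+1) ∉ S := fun h => hnot (hS h)
        rw [Finset.sum_insert hnS]
        omega
    · intro S hS S' hS' hss
      simp only [Finset.coe_filter, Set.mem_setOf_eq, Finset.mem_powerset] at hS hS'
      have h1 : (p+1) ∉ S := fun h => hnot (hS.1 h)
      have h2 : (p+1) ∉ S' := fun h => hnot (hS'.1 h)
      have := congrArg (Finset.erase · (p+1)) hss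
      simpa [Finset.erase_insert, h1, h2] using this
  · apply Finset.disjoint_filter_filter
    rw [Finset.disjoint_left]
    intro S hS hS'
    rw [Finset.mem_powerset] at hS
    rw [Finset.mem_image] at hS'
    obtain ⟨S', _, rfl⟩ := hS'
    exact hnot (hS (Finset.mem_insert_self _ _))

lemma fib_succ_succ' (q : ℕ) (hq : 1 ≤ q) :
    Nat.fib (q + 2) = Nat.fib (q + 1) + Nat.fib q := by
  rw [Nat.fib_add_two]; omega

lemma zero_step (q T : ℕ) (hq : 1 ≤ q) (hT : T < Nat.fib (q + 1)) :
    Nn (q+1) T = Nn q T ∧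
    Nn (q+1) (T + Nat.fib (q+2)) = Nn q (T + Nat.fib q) ∧
    Nn (q+1) (T + Nat.fib (q+1)) = Nn q T + Nn q (T + Nat.fib (q+1)) := by
  have hfib := fib_succ_succ' q hq
  refine ⟨?_, ?_, ?_⟩
  · rw [Nn_split q T hq, if_neg (by omega), Nat.add_zero]
  · rw [Nn_split q _ hq, if_pos (by omega)]
    have h0 : Nn q (T + Nat.fib (q+2)) = 0 := Nn_eq_zero hq (by omega)
    have : T + Nat.fib (q+2) - Nat.fib (q+1) = T + Nat.fib q := by omega
    rw [h0, this, Nat.zero_add]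
  · rw [Nn_split q _ hq, if_pos (by omega)]
    have : T + Nat.fib (q+1) - Nat.fib (q+1) = T := by omega
    rw [this, Nat.add_comm]

lemma one_step (q T : ℕ) (hq : 1 ≤ q) (hT : T < Nat.fib (q + 1)) :
    Nn (q+1) (T + Nat.fib (q+1)) = Nn q T + Nn q (T + Nat.fib (q+1)) ∧
    Nn (q+1) (T + Nat.fib (q+1) + Nat.fib (q+2)) = 0 ∧
    Nn (q+1) (T + Nat.fib (q+1) + Nat.fib (q+1)) = Nn q (T + Nat.fib (q+1)) := by
  have hfib := fib_succ_succ' q hq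
  have hle : Nat.fib q ≤ Nat.fib (q+1) := Nat.fib_mono (by omega)
  refine ⟨(zero_step q T hq hT).2.2, ?_, ?_⟩
  · rw [Nn_split q _ hq, if_pos (by omega)]
    have h0 : Nn q (T + Nat.fib (q+1) + Nat.fib (q+2)) = 0 := Nn_eq_zero hq (by omega)
    have h1 : Nn q (T + Nat.fib (q+1) + Nat.fib (q+2) - Nat.fib (q+1)) = 0 :=
      Nn_eq_zero hq (by omega)
    omega
  · rw [Nn_split q _ hq, if_pos (by omega)]
    have h0 : Nn q (T + Nat.fib (q+1) + Nat.fib (q+1)) = 0 := Nn_eq_zero hq (by omega)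
    have : T + Nat.fib (q+1) + Nat.fib (q+1) - Nat.fib (q+1) = T + Nat.fib (q+1) := by omega
    rw [h0, this, Nat.zero_add]

lemma zero_run (p T : ℕ) (hp : 1 ≤ p) (hT : T < Nat.fib (p+1)) : ∀ j : ℕ,
    Nn (p+j) T = Nn p T ∧
    Nn (p+j) (T + Nat.fib (p+j+1)) =
      (j/2) * Nn p T + (if j % 2 = 0 then Nn p (T + Nat.fib (p+1)) else Nn p (T + Nat.fib p)) ∧
    Nn (p+j) (T + Nat.fib (p+j)) =
      ((j+1)/2) * Nn p T + (if j % 2 = 0 then Nn p (T + Nat.fib p) else Nn p (T + Nat.fib (p+1)))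
  | 0 => by simp
  | (j+1) => by
    obtain ⟨ih1, ih2, ih3⟩ := zero_run p T hp hT j
    have hq : 1 ≤ p + j := by omega
    have hTq : T < Nat.fib (p + j + 1) := lt_of_lt_of_le hT (Nat.fib_mono (by omega))
    obtain ⟨s1, s2, s3⟩ := zero_step (p+j) T hq hTq
    simp only [← Nat.add_assoc]
    refine ⟨by rw [s1, ih1], ?_, ?_⟩
    · rw [s2, ih3]
      rcases Nat.even_or_odd j with ⟨r, rfl⟩ | ⟨r, rfl⟩
      · have h1 : (r + r) % 2 = 0 := by omega
        have h2 : (r + r + 1) % 2 = 1 := by omega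
        have h3 : (r + r + 1) / 2 = r := by omega
        simp only [h1, h2, h3, eq_self_iff_true, Nat.one_ne_zero, if_true, if_false]
      · have h1 : (2*r + 1) % 2 = 1 := by omega
        have h2 : (2*r + 1 + 1) % 2 = 0 := by omega
        have h3 : (2*r + 1 + 1) / 2 = r + 1 := by omega
        have h4 : (2*r + 1) / 2 = r := by omega
        simp only [h1, h2, h3, h4, eq_self_iff_true, Nat.one_ne_zero, if_true, if_false]
        try ring
    · rw [s3, ih1, ih2]
      rcases Nat.even_or_odd j with ⟨r, rfl⟩ | ⟨r, rfl⟩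
      · have h1 : (r + r) % 2 = 0 := by omega
        have h2 : (r + r + 1) % 2 = 1 := by omega
        have h3 : (r + r + 1 + 1) / 2 = r + 1 := by omega
        have h5 : (r + r) / 2 = r := by omega
        simp only [h1, h2, h3, h5, eq_self_iff_true, Nat.one_ne_zero, if_true, if_false]
        try ring
      · have h1 : (2*r + 1) % 2 = 1 := by omega
        have h2 : (2*r + 1 + 1) % 2 = 0 := by omega
        have h3 : (2*r + 1 + 1 + 1) / 2 = r + 1 := by omega
        have h4 : (2*r + 1) / 2 = r := by omega
        simp only [h1, h2, h3, h4, eq_self_iff_true, Nat.one_ne_zero, if_true, if_false]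
        try ring

lemma init_state (q : ℕ) (hq : 1 ≤ q) :
    Nn q 0 = 1 ∧ Nn q (Nat.fib (q+1)) = (q-1)/2 ∧ Nn q (Nat.fib q) = q/2 := by
  obtain ⟨j, rfl⟩ : ∃ j, q = 1 + j := ⟨q - 1, by omega⟩
  obtain ⟨e1, e2, e3⟩ := zero_run 1 0 le_rfl (by decide) j
  have b1 : Nn 1 0 = 1 := by decide
  have b2 : Nn 1 (0 + Nat.fib (1+1)) = 0 := by decide
  have b3 : Nn 1 (0 + Nat.fib 1) = 0 := by decide
  rw [Nat.zero_add] at e2 e3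
  rw [b1] at e1 e2 e3
  rw [b2, b3] at e2 e3  -- might fail on if-branches
  refine ⟨e1, ?_, ?_⟩
  · rw [e2]
    rcases Nat.even_or_odd j with ⟨r, rfl⟩ | ⟨r, rfl⟩ <;> simp <;> omega
  · rw [e3]
    rcases Nat.even_or_odd j with ⟨r, rfl⟩ | ⟨r, rfl⟩ <;> simp <;> omega

/-- Suffix sums of the Zeckendorf expansion. -/
def Ssum (m : ℕ → ℕ) (k i : ℕ) : ℕ := ∑ j ∈ Finset.Icc i k, Nat.fib (m j)

lemma Ssum_last (m : ℕ → ℕ) (k : ℕ) : Ssum m k k = Nat.fib (m k) := by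
  simp [Ssum]

lemma Ssum_step (m : ℕ → ℕ) (k i : ℕ) (h : i < k) :
    Ssum m k i = Nat.fib (m i) + Ssum m k (i+1) := by
  rw [Ssum, Ssum, ← Finset.insert_Icc_add_one_left_eq_Icc (by omega), Finset.sum_insert (by simp)]

lemma Ssum_lt (k : ℕ) (m : ℕ → ℕ)
    (hgap : ∀ i, 1 ≤ i → i ≤ k → m i + 2 ≤ m (i - 1)) (hmk : 2 ≤ m k) :
    ∀ d, d ≤ k → Ssum m k (k - d) < Nat.fib (m (k - d) + 1)
  | 0, _ => by
    rw [Nat.sub_zero, Ssum_last]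
    exact Nat.fib_lt_fib_succ hmk
  | (d+1), hd => by
    have ih := Ssum_lt k m hgap hmk d (by omega)
    have hi : k - (d+1) < k := by omega
    have hstep := Ssum_step m k (k - (d+1)) hi
    have hsucc : k - (d+1) + 1 = k - d := by omega
    rw [hsucc] at hstep
    have hg := hgap (k - d) (by omega) (by omega)
    have hgd : k - d - 1 = k - (d+1) := by omega
    rw [hgd] at hg
    -- m (k-d) + 1 ≤ m (k-(d+1)) - 1
    have hmono : Nat.fib (m (k - d) + 1) ≤ Nat.fib (m (k - (d+1)) - 1) :=
      Nat.fib_mono (by omega)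
    obtain ⟨w, hw⟩ : ∃ w, m (k - (d+1)) = w + 1 := ⟨m (k - (d+1)) - 1, by omega⟩
    have hfib : Nat.fib (w + 2) = Nat.fib w + Nat.fib (w + 1) := Nat.fib_add_two
    have e1 : m (k - (d+1)) + 1 = w + 2 := by omega
    have e2 : m (k - (d+1)) - 1 = w := by omega
    rw [e2] at hmono
    rw [hstep, e1, hfib, hw]
    omega

lemma m_ge (k : ℕ) (m : ℕ → ℕ)
    (hgap : ∀ i, 1 ≤ i → i ≤ k → m i + 2 ≤ m (i - 1)) (hmk : 2 ≤ m k) :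
    ∀ d, d ≤ k → 2 ≤ m (k - d)
  | 0, _ => by simpa using hmk
  | (d+1), hd => by
    have ih := m_ge k m hgap hmk d (by omega)
    have hg := hgap (k - d) (by omega) (by omega)
    have e : k - d - 1 = k - (d+1) := by omega
    rw [e] at hg
    omega

lemma main_inv (k : ℕ) (m t : ℕ → ℕ) (ε : ℕ → ℤ) (u : ℕ → ℤ)
    (hgap : ∀ i, 1 ≤ i → i ≤ k → m i + 2 ≤ m (i - 1))
    (hmk : 2 ≤ m k)
    (ht : ∀ i, 1 ≤ i → i ≤ k → t i = (m (i - 1) - m i + 2) / 2)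
    (hε : ∀ i, 1 ≤ i → i ≤ k →
      ε i = 2 * (t i : ℤ) - 1 - (m (i - 1) : ℤ) + (m i : ℤ))
    (hu0 : u 0 = 1) (hu1 : u 1 = ((m k / 2 : ℕ) : ℤ))
    (hurec : ∀ c, c + 1 ≤ k → u (c+2) = (t (k - c) : ℤ) * u (c+1) - ε (k - c) * u c) :
    ∀ c, c ≤ k →
      (Nn (m (k - c)) (Ssum m k (k - c)) : ℤ) = u (c+1) ∧
      Nn (m (k - c)) (Ssum m k (k - c) + Nat.fib (m (k - c) + 1)) = 0 ∧
      (Nn (m (k - c)) (Ssum m k (k - c) + Nat.fib (m (k - c))) : ℤ) = u (c+1) - u c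
  | 0, _ => by
    rw [Nat.sub_zero, Ssum_last]
    obtain ⟨q, hq⟩ : ∃ q, m k = q + 1 := ⟨m k - 1, by omega⟩
    have hq1 : 1 ≤ q := by omega
    obtain ⟨i1, i2, i3⟩ := init_state q hq1
    obtain ⟨o1, o2, o3⟩ := one_step q 0 hq1 (Nat.fib_pos.mpr (by omega))
    rw [Nat.zero_add] at o1 o2 o3
    rw [i1] at o1
    rw [hq]
    have hv : Nn q (Nat.fib (q+1)) = (q-1)/2 := i2
    rw [hv] at o1 o3
    refine ⟨?_, ?_, ?_⟩
    · rw [o1, hu1]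
      have : 1 + (q-1)/2 = (q+1)/2 := by omega
      rw [this, hq]
    · exact o2
    · rw [o3, hu1, hu0]
      have : (((q-1)/2 : ℕ) : ℤ) = (((q+1)/2 : ℕ) : ℤ) - 1 := by
        have : (q-1)/2 + 1 = (q+1)/2 := by omega
        omega
      rw [this, hq]
  | (c+1), hc => by
    obtain ⟨ih1, ih2, ih3⟩ := main_inv k m t ε u hgap hmk ht hε hu0 hu1 hurec c (by omega)
    set p := m (k - c) with hp
    set T := Ssum m k (k - c) with hT
    have hkc : k - (c+1) = k - c - 1 := by omega
    have hgapc := hgap (k - c) (by omega) (by omega)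
    rw [← hkc] at hgapc
    -- D = gap, g = D - 1 zeros
    set D := m (k - (c+1)) - p with hD
    have hD2 : 2 ≤ D := by omega
    set g := D - 1 with hg
    have hTlt : T < Nat.fib (p + 1) := by
      have := Ssum_lt k m hgap hmk c (by omega)
      exact this
    have hp1 : 1 ≤ p := by
      have := m_ge k m hgap hmk c (by omega); omega
    obtain ⟨z1, z2, z3⟩ := zero_run p T hp1 hTlt g
    have hq : p + g = m (k - (c+1)) - 1 := by omega
    have hq1 : 1 ≤ p + g := by omega
    have hTlt2 : T < Nat.fib (p + g + 1) := lt_of_lt_of_le hTlt (Nat.fib_mono (by omega))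
    obtain ⟨o1, o2, o3⟩ := one_step (p + g) T hq1 hTlt2
    have hsucc : p + g + 1 = m (k - (c+1)) := by omega
    have hST : T + Nat.fib (p + g + 1) = Ssum m k (k - (c+1)) := by
      have h1 := Ssum_step m k (k - (c+1)) (by omega)
      have h2 : k - (c+1) + 1 = k - c := by omega
      rw [h2] at h1
      rw [hsucc, h1, ← hT]
      omega
    -- known values at p
    have hy0 : Nn p (T + Nat.fib (p + 1)) = 0 := ih2
    -- rewrite the run outputs
    rw [hy0] at z2 z3
    rw [z1, z2] at o1
    rw [z2] at o3
    -- now prove the three goals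
    have hx : (Nn p T : ℤ) = u (c+1) := ih1
    have hz : (Nn p (T + Nat.fib p) : ℤ) = u (c+1) - u c := ih3
    have hts := ht (k - c) (by omega) (by omega)
    have hεs := hε (k - c) (by omega) (by omega)
    rw [← hkc] at hts hεs
    have hrec := hurec c (by omega)
    -- establish the value of the new x
    have key : ((Nn p T + (g / 2 * Nn p T +
        if g % 2 = 0 then 0 else Nn p (T + Nat.fib p)) : ℕ) : ℤ) = u (c + 2) := by
      rw [hrec, hεs, hts]
      rcases Nat.even_or_odd D with ⟨s, hs⟩ | ⟨s, hs⟩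
      · -- D even: g odd
        have e1 : g % 2 = 1 := by omega
        have e2 : g / 2 = s - 1 := by omega
        have e3 : (m (k - (c+1)) - m (k - c) + 2) / 2 = s + 1 := by omega
        have e4 : (m (k - (c+1)) : ℤ) = (m (k - c) : ℤ) + 2 * s := by
          have : m (k - (c+1)) = m (k - c) + 2 * s := by omega
          omega
        simp only [e1, Nat.one_ne_zero, if_false, e2, e3, e4]
        push_cast
        rw [hx, hz]
        have hs1 : 1 ≤ s := by omega
        have e5 : ((s - 1 : ℕ) : ℤ) = (s : ℤ) - 1 := by omega
        rw [e5]
        ring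
      · -- D odd: g even
        have e1 : g % 2 = 0 := by omega
        have e2 : g / 2 = s := by omega
        have e3 : (m (k - (c+1)) - m (k - c) + 2) / 2 = s + 1 := by omega
        have e4 : (m (k - (c+1)) : ℤ) = (m (k - c) : ℤ) + 2 * s + 1 := by
          have : m (k - (c+1)) = m (k - c) + 2 * s + 1 := by omega
          omega
        simp only [e1, eq_self_iff_true, if_true, e2, e3, e4]
        push_cast
        rw [hx]
        ring
    rw [Nat.cast_add] at key
    refine ⟨?_, ?_, ?_⟩
    · rw [hST, hsucc] at o1
      rw [o1, Nat.cast_add]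
      linarith [key]
    · have e6 : p + g + 2 = m (k - (c+1)) + 1 := by omega
      rw [hST, e6, hsucc] at o2
      exact o2
    · rw [hST, hsucc] at o3
      rw [o3]
      linarith [key, hx]

open scoped Classical in
noncomputable def idx (x : ℕ) : ℕ :=
  if h : ∃ n, 2 ≤ n ∧ Nat.fib n = x then h.choose else 0

lemma idx_spec {x : ℕ} (h : ∃ n, 2 ≤ n ∧ Nat.fib n = x) :
    2 ≤ idx x ∧ Nat.fib (idx x) = x := by
  rw [idx, dif_pos h]; exact h.choose_spec

lemma isFib_exists {x : ℕ} (h : IsFibNum x) : ∃ n, 2 ≤ n ∧ Nat.fib n = x := by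
  obtain ⟨n, hn, rfl⟩ := h
  rcases Nat.lt_or_ge n 2 with h2 | h2
  · interval_cases n
    · exact ⟨2, le_rfl, rfl⟩
  · exact ⟨n, h2, rfl⟩

lemma fib_inj {a b : ℕ} (ha : 2 ≤ a) (hb : 2 ≤ b) (h : Nat.fib a = Nat.fib b) : a = b :=
  Nat.fib_strictMonoOn.injOn ha hb h

lemma idx_fib {j : ℕ} (hj : 2 ≤ j) : idx (Nat.fib j) = j := by
  obtain ⟨h1, h2⟩ := idx_spec ⟨j, hj, rfl⟩
  exact fib_inj h1 hj h2

lemma R_eq_Nn (M H : ℕ) (hH : H < Nat.fib (M + 1)) : R H = Nn M H := by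
  classical
  rw [R, Nn]
  rw [← Nat.card_eq_finsetCard]
  apply Nat.card_congr
  refine
    { toFun := fun V => ⟨V.1.image idx, ?_⟩
      invFun := fun I => ⟨I.1.image Nat.fib, ?_⟩
      left_inv := ?_
      right_inv := ?_ }
  · -- membership in filter
    obtain ⟨V, hV, hsum⟩ := V
    simp only [Finset.mem_coe, Finset.mem_filter, Finset.mem_powerset]
    constructor
    · intro j hj
      rw [Finset.mem_image] at hj
      obtain ⟨x, hx, rfl⟩ := hj
      obtain ⟨h1, h2⟩ := idx_spec (isFib_exists (hV x hx))
      rw [Finset.mem_Icc]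
      refine ⟨h1, ?_⟩
      by_contra hcon
      have hxH : x ≤ H := hsum ▸ Finset.single_le_sum (fun i _ => Nat.zero_le i) hx
      have : Nat.fib (M + 1) ≤ Nat.fib (idx x) := Nat.fib_mono (by omega)
      omega
    · rw [Finset.sum_image]
      · rw [← hsum]
        apply Finset.sum_congr rfl
        intro x hx
        exact (idx_spec (isFib_exists (hV x hx))).2
      · intro x hx y hy hxy
        have h1 := (idx_spec (isFib_exists (hV x hx))).2
        have h2 := (idx_spec (isFib_exists (hV y hy))).2
        rw [← h1, ← h2, hxy]
  · obtain ⟨I, hI⟩ := I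
    simp only [Finset.mem_coe, Finset.mem_filter, Finset.mem_powerset] at hI
    obtain ⟨hsub, hsum⟩ := hI
    constructor
    · intro x hx
      rw [Finset.mem_image] at hx
      obtain ⟨j, hj, rfl⟩ := hx
      have := hsub hj
      rw [Finset.mem_Icc] at this
      exact ⟨j, by omega, rfl⟩
    · rw [Finset.sum_image, hsum]
      intro x hx y hy hxy
      have hx2 := (Finset.mem_Icc.mp (hsub hx)).1
      have hy2 := (Finset.mem_Icc.mp (hsub hy)).1
      exact fib_inj hx2 hy2 hxy
  · intro V
    obtain ⟨V, hV, hsum⟩ := V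
    apply Subtype.ext
    simp only [Finset.image_image]
    rw [show ((V.image (Nat.fib ∘ idx)) : Finset ℕ) = V.image id from ?_, Finset.image_id]
    apply Finset.image_congr
    intro x hx
    exact (idx_spec (isFib_exists (hV x hx))).2
  · intro I
    obtain ⟨I, hI⟩ := I
    simp only [Finset.mem_coe, Finset.mem_filter, Finset.mem_powerset] at hI
    apply Subtype.ext
    simp only [Finset.image_image]
    rw [show ((I.image (idx ∘ Nat.fib)) : Finset ℕ) = I.image id from ?_, Finset.image_id]
    apply Finset.image_congr
    intro j hj
    exact idx_fib (Finset.mem_Icc.mp (hI.1 hj)).1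

/-- The backward state sequence: `(useq c).1 = u c`, `(useq c).2 = u (c+1)`. -/
noncomputable def useq (k : ℕ) (m t : ℕ → ℕ) (ε : ℕ → ℤ) : ℕ → ℤ × ℤ
  | 0 => (1, ((m k / 2 : ℕ) : ℤ))
  | (c+1) => ((useq k m t ε c).2,
      (t (k - c) : ℤ) * (useq k m t ε c).2 - ε (k - c) * (useq k m t ε c).1)

lemma unwind (k : ℕ) (t : ℕ → ℕ) (ε a u : ℕ → ℤ)
    (hurec : ∀ c, c + 1 ≤ k → u (c+2) = (t (k - c) : ℤ) * u (c+1) - ε (k - c) * u c)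
    (ha0 : a 0 = 1) (ha1 : 1 ≤ k → a 1 = (t 1 : ℤ))
    (ha : ∀ l, 1 ≤ l → l ≤ k - 1 → a (l+1) = (t (l+1) : ℤ) * a l - ε l * a (l-1)) :
    ∀ l, 1 ≤ l → l ≤ k → u (k+1) = a l * u (k+1-l) - ε l * a (l-1) * u (k-l) := by
  intro l hl
  induction l, hl using Nat.le_induction with
  | base =>
    intro hk
    have h := hurec (k-1) (by omega)
    have e1 : k - 1 + 2 = k + 1 := by omega
    have e2 : k - (k - 1) = 1 := by omega
    have e3 : k - 1 + 1 = k := by omega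
    have e4 : k + 1 - 1 = k := by omega
    rw [e1, e2, e3] at h
    rw [e4, h, ha1 hk, ha0]
    ring
  | succ l hl ih =>
    intro hk
    have ihh := ih (by omega)
    have h := hurec (k - l - 1) (by omega)
    have e1 : k - l - 1 + 2 = k + 1 - l := by omega
    have e2 : k - (k - l - 1) = l + 1 := by omega
    have e3 : k - l - 1 + 1 = k - l := by omega
    rw [e1, e2, e3] at h
    rw [h] at ihh
    have hal := ha l hl (by omega)
    have e4 : k + 1 - (l + 1) = k - l := by omega
    have e5 : l + 1 - 1 = l := by omega
    have e6 : k - (l + 1) = k - l - 1 := by omega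
    rw [e4, e5, e6, hal, ihh]
    ring

/-- Theorem 1 (exact formula for the Fibonacci partition function). -/
theorem fibonacci_partition_exact_formula
    (H k : ℕ) (m t : ℕ → ℕ) (ε a : ℕ → ℤ)
    (hH : 0 < H)
    (hexp : H = ∑ i ∈ Finset.range (k + 1), Nat.fib (m i))
    (hgap : ∀ i : ℕ, 1 ≤ i → i ≤ k → m i + 2 ≤ m (i - 1))
    (hmk : 2 ≤ m k)
    (ht : ∀ i : ℕ, 1 ≤ i → i ≤ k → t i = (m (i - 1) - m i + 2) / 2)
    (hε : ∀ i : ℕ, 1 ≤ i → i ≤ k →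
      ε i = 2 * (t i : ℤ) - 1 - (m (i - 1) : ℤ) + (m i : ℤ))
    (ha0 : a 0 = 1)
    (ha1 : 1 ≤ k → a 1 = (t 1 : ℤ))
    (ha : ∀ l : ℕ, 1 ≤ l → l ≤ k - 1 →
      a (l + 1) = (t (l + 1) : ℤ) * a l - ε l * a (l - 1)) :
    (R H : ℤ) =
      if 1 ≤ k then a k * ((m k / 2 : ℕ) : ℤ) - ε k * a (k - 1)
      else ((m 0 / 2 : ℕ) : ℤ) := by
  set u : ℕ → ℤ := fun n => (useq k m t ε n).1 with hu
  have hu0 : u 0 = 1 := rfl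
  have hu1 : u 1 = ((m k / 2 : ℕ) : ℤ) := rfl
  have hurec : ∀ c, c + 1 ≤ k →
      u (c+2) = (t (k - c) : ℤ) * u (c+1) - ε (k - c) * u c := fun c _ => rfl
  have hinv := main_inv k m t ε u hgap hmk ht hε hu0 hu1 hurec k le_rfl
  have hkk : k - k = 0 := by omega
  rw [hkk] at hinv
  have hHs : Ssum m k 0 = H := by
    rw [Ssum, hexp, Finset.range_eq_Ico, Finset.Ico_add_one_right_eq_Icc]
  rw [hHs] at hinv
  have hHlt : H < Nat.fib (m 0 + 1) := by
    have := Ssum_lt k m hgap hmk k le_rfl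
    rw [hkk, hHs] at this
    exact this
  have hRN : R H = Nn (m 0) H := R_eq_Nn (m 0) H hHlt
  rcases Nat.lt_or_ge k 1 with hk | hk
  · -- k = 0
    have hk0 : k = 0 := by omega
    rw [if_neg (by omega)]
    rw [hRN]
    rw [hinv.1, hk0, hu1, hk0]
  · rw [if_pos hk]
    rw [hRN, hinv.1]
    have := unwind k t ε a u hurec ha0 ha1 ha k hk le_rfl
    have e1 : k + 1 - k = 1 := by omega
    rw [e1, hkk, hu0, hu1] at this
    rw [this]
    ring
end

section
/- (Carlitz) For every integer m ≥ 2, R(F_m) = ⌊m/2⌋. -/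
open scoped BigOperators
open Filter Topology

namespace CarlitzAux

/-- `Good T n`: `T` is a set of Fibonacci indices (all `≥ 2`) whose Fibonacci values sum to `n`. -/
def Good (T : Finset ℕ) (n : ℕ) : Prop :=
  (∀ k ∈ T, 2 ≤ k) ∧ ∑ k ∈ T, Nat.fib k = n

lemma fib_inj {a b : ℕ} (ha : 2 ≤ a) (hb : 2 ≤ b) (h : Nat.fib a = Nat.fib b) : a = b := by
  rcases lt_trichotomy a b with h' | h' | h'
  · exact absurd ((Nat.fib_lt_fib ha).2 h') (by omega)
  · exact h'
  · exact absurd ((Nat.fib_lt_fib hb).2 h') (by omega)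

lemma mem_le {T : Finset ℕ} {j : ℕ} (hj : 2 ≤ j) (h : Good T (Nat.fib j))
    {k : ℕ} (hk : k ∈ T) : k ≤ j := by
  have h1 : Nat.fib k ≤ Nat.fib j := by
    rw [← h.2]
    exact Finset.single_le_sum (f := Nat.fib) (fun _ _ => Nat.zero_le _) hk
  by_contra hc
  have h2 : Nat.fib j < Nat.fib k := (Nat.fib_lt_fib hj).2 (by omega)
  omega

lemma sum_Icc_fib : ∀ t : ℕ, ∑ k ∈ Finset.Icc 2 (t + 2), Nat.fib k + 2 = Nat.fib (t + 4)
  | 0 => by decide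
  | (t + 1) => by
    have ih := sum_Icc_fib t
    rw [show t + 1 + 2 = (t + 2) + 1 by ring,
      Finset.sum_Icc_succ_top (by omega) Nat.fib]
    have hf : Nat.fib (t + 5) = Nat.fib (t + 3) + Nat.fib (t + 4) := Nat.fib_add_two
    have e1 : Nat.fib (t + 2 + 1) = Nat.fib (t + 3) := rfl
    have e2 : Nat.fib (t + 1 + 4) = Nat.fib (t + 5) := rfl
    omega

lemma classify (k : ℕ) (T : Finset ℕ) :
    Good T (Nat.fib (k + 4)) ↔
      T = {k + 4} ∨ ∃ T', Good T' (Nat.fib (k + 2)) ∧ T = insert (k + 3) T' := by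
  have hf : Nat.fib (k + 4) = Nat.fib (k + 2) + Nat.fib (k + 3) := Nat.fib_add_two
  constructor
  · intro h
    by_cases hm : k + 4 ∈ T
    · left
      have h0 : ∑ x ∈ T.erase (k + 4), Nat.fib x + Nat.fib (k + 4) = Nat.fib (k + 4) := by
        rw [Finset.sum_erase_add _ _ hm, h.2]
      have h1 : ∑ x ∈ T.erase (k + 4), Nat.fib x = 0 := by omega
      have h2 : T.erase (k + 4) = ∅ := by
        rw [Finset.eq_empty_iff_forall_notMem]
        intro x hx
        have hx2 : 2 ≤ x := h.1 x (Finset.mem_of_mem_erase hx)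
        have := Finset.sum_eq_zero_iff.1 h1 x hx
        have : 0 < Nat.fib x := Nat.fib_pos.2 (by omega)
        omega
      have h3 := Finset.insert_erase hm
      rw [h2] at h3
      simp at h3
      exact h3.symm
    · right
      have h3 : k + 3 ∈ T := by
        by_contra hn3
        have hsub : T ⊆ Finset.Icc 2 (k + 2) := by
          intro x hx
          have hx2 : 2 ≤ x := h.1 x hx
          have hxle : x ≤ k + 4 := mem_le (by omega) h hx
          have : x ≠ k + 4 := fun he => hm (he ▸ hx)
          have : x ≠ k + 3 := fun he => hn3 (he ▸ hx)
          exact Finset.mem_Icc.2 ⟨hx2, by omega⟩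
        have hle : ∑ x ∈ T, Nat.fib x ≤ ∑ x ∈ Finset.Icc 2 (k + 2), Nat.fib x :=
          Finset.sum_le_sum_of_subset hsub
        have := sum_Icc_fib k
        have := h.2
        omega
      refine ⟨T.erase (k + 3), ⟨fun x hx => h.1 x (Finset.mem_of_mem_erase hx), ?_⟩,
        (Finset.insert_erase h3).symm⟩
      have h0 : ∑ x ∈ T.erase (k + 3), Nat.fib x + Nat.fib (k + 3) = Nat.fib (k + 4) := by
        rw [Finset.sum_erase_add _ _ h3, h.2]
      omega
  · rintro (rfl | ⟨T', hT', rfl⟩)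
    · exact ⟨by simp, by simp⟩
    · have hnm : k + 3 ∉ T' := fun hmem => by
        have := mem_le (by omega) hT' hmem; omega
      refine ⟨?_, ?_⟩
      · intro x hx
        rcases Finset.mem_insert.1 hx with rfl | hx'
        · omega
        · exact hT'.1 x hx'
      · rw [Finset.sum_insert hnm, hT'.2]
        omega

/-- The finset of good index sets. -/
def FF (n : ℕ) : Finset (Finset ℕ) :=
  (Finset.Icc 2 (n + 1)).powerset.filter (fun T => ∑ k ∈ T, Nat.fib k = n)

lemma mem_FF {T : Finset ℕ} {n : ℕ} : T ∈ FF n ↔ Good T n := by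
  simp only [FF, Finset.mem_filter, Finset.mem_powerset, Good]
  constructor
  · rintro ⟨hsub, hsum⟩
    exact ⟨fun k hk => (Finset.mem_Icc.1 (hsub hk)).1, hsum⟩
  · rintro ⟨h2, hsum⟩
    refine ⟨fun k hk => ?_, hsum⟩
    have h1 : Nat.fib k ≤ n := by
      rw [← hsum]
      exact Finset.single_le_sum (f := Nat.fib) (fun _ _ => Nat.zero_le _) hk
    have := Nat.le_fib_add_one k
    exact Finset.mem_Icc.2 ⟨h2 k hk, by omega⟩

noncomputable def cnt (n : ℕ) : ℕ := (FF n).card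

lemma cnt_eq_card (n : ℕ) : Nat.card {T : Finset ℕ // Good T n} = cnt n := by
  have h1 : Nat.card {T : Finset ℕ // Good T n} = Nat.card {T : Finset ℕ // T ∈ FF n} :=
    Nat.card_congr (Equiv.subtypeEquivRight fun T => mem_FF.symm)
  rw [h1, Nat.card_eq_fintype_card, Fintype.card_coe, cnt]

lemma FF_rec (k : ℕ) :
    FF (Nat.fib (k + 4)) = insert {k + 4} ((FF (Nat.fib (k + 2))).image (insert (k + 3))) := by
  ext T
  rw [mem_FF, classify, Finset.mem_insert, Finset.mem_image]
  constructor
  · rintro (rfl | ⟨T', hT', rfl⟩)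
    · exact Or.inl rfl
    · exact Or.inr ⟨T', mem_FF.2 hT', rfl⟩
  · rintro (rfl | ⟨T', hT', rfl⟩)
    · exact Or.inl rfl
    · exact Or.inr ⟨T', mem_FF.1 hT', rfl⟩

lemma cnt_rec (k : ℕ) : cnt (Nat.fib (k + 4)) = cnt (Nat.fib (k + 2)) + 1 := by
  unfold cnt
  rw [FF_rec]
  have hnotmem : ({k + 4} : Finset ℕ) ∉ (FF (Nat.fib (k + 2))).image (insert (k + 3)) := by
    rw [Finset.mem_image]
    rintro ⟨T', _, hT'⟩
    have : k + 3 ∈ ({k + 4} : Finset ℕ) := hT' ▸ Finset.mem_insert_self _ _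
    simp at this
  rw [Finset.card_insert_of_notMem hnotmem, Finset.card_image_of_injOn]
  intro T1 h1 T2 h2 heq
  have hn1 : k + 3 ∉ T1 := fun hm => by have := mem_le (by omega) (mem_FF.1 h1) hm; omega
  have hn2 : k + 3 ∉ T2 := fun hm => by have := mem_le (by omega) (mem_FF.1 h2) hm; omega
  have := congrArg (fun s => Finset.erase s (k + 3)) heq
  simpa [Finset.erase_insert hn1, Finset.erase_insert hn2] using this

lemma cnt_one : cnt 1 = 1 := by decide
lemma cnt_two : cnt 2 = 1 := by decide

theorem cnt_fib : ∀ m : ℕ, 2 ≤ m → cnt (Nat.fib m) = m / 2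
  | 0, h => by omega
  | 1, h => by omega
  | 2, _ => by rw [show Nat.fib 2 = 1 from rfl, cnt_one]
  | 3, _ => by rw [show Nat.fib 3 = 2 from rfl, cnt_two]
  | (k + 4), _ => by
    rw [cnt_rec k, cnt_fib (k + 2) (by omega)]
    omega

lemma image_fib_inj {T T' : Finset ℕ} {n n' : ℕ} (h : Good T n) (h' : Good T' n')
    (he : T.image Nat.fib = T'.image Nat.fib) : T ⊆ T' := by
  intro k hk
  have : Nat.fib k ∈ T'.image Nat.fib := he ▸ Finset.mem_image_of_mem _ hk
  obtain ⟨k', hk', hke⟩ := Finset.mem_image.1 this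
  exact fib_inj (h'.1 k' hk') (h.1 k hk) hke ▸ hk'

lemma R_eq_cnt (n : ℕ) : R n = cnt n := by
  rw [← cnt_eq_card]
  refine (Nat.card_congr (Equiv.ofBijective
    (fun p : {T : Finset ℕ // Good T n} =>
      (⟨p.1.image Nat.fib, ?_, ?_⟩ :
        {S : Finset ℕ // (∀ x ∈ S, IsFibNum x) ∧ (∑ x ∈ S, x) = n})) ⟨?_, ?_⟩)).symm
  · intro x hx
    obtain ⟨k, hk, rfl⟩ := Finset.mem_image.1 hx
    exact ⟨k, by have := p.2.1 k hk; omega, rfl⟩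
  · rw [Finset.sum_image (fun a ha b hb hab => fib_inj (p.2.1 a ha) (p.2.1 b hb) hab)]
    exact p.2.2
  · rintro ⟨T, hT⟩ ⟨T', hT'⟩ he
    have he' : T.image Nat.fib = T'.image Nat.fib := congrArg Subtype.val he
    exact Subtype.ext (Finset.Subset.antisymm (image_fib_inj hT hT' he')
      (image_fib_inj hT' hT he'.symm))
  · rintro ⟨S, hS1, hS2⟩
    classical
    set g : ℕ → ℕ := fun x => if h : ∃ k, 2 ≤ k ∧ Nat.fib k = x then h.choose else 0 with hg
    have hgs : ∀ x ∈ S, 2 ≤ g x ∧ Nat.fib (g x) = x := by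
      intro x hx
      obtain ⟨m, hm, rfl⟩ := hS1 x hx
      have hex : ∃ k, 2 ≤ k ∧ Nat.fib k = Nat.fib m := by
        rcases Nat.lt_or_ge m 2 with hm2 | hm2
        · exact ⟨2, le_refl _, by interval_cases m <;> rfl⟩
        · exact ⟨m, hm2, rfl⟩
      rw [hg]
      simp only [dif_pos hex]
      exact hex.choose_spec
    have hginj : ∀ a ∈ S, ∀ b ∈ S, g a = g b → a = b := by
      intro a ha b hb hab
      rw [← (hgs a ha).2, ← (hgs b hb).2, hab]
    have hGood : Good (S.image g) n := by
      constructor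
      · intro k hk
        obtain ⟨x, hx, rfl⟩ := Finset.mem_image.1 hk
        exact (hgs x hx).1
      · rw [Finset.sum_image hginj, ← hS2]
        exact Finset.sum_congr rfl fun x hx => (hgs x hx).2
    refine ⟨⟨S.image g, hGood⟩, Subtype.ext ?_⟩
    show (S.image g).image Nat.fib = S
    rw [Finset.image_image]
    calc Finset.image (Nat.fib ∘ g) S = Finset.image id S :=
          Finset.image_congr fun x hx => (hgs x hx).2
      _ = S := Finset.image_id

end CarlitzAux

/-- Carlitz: `R (F_m) = ⌊m/2⌋` for `m ≥ 2`. -/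
theorem carlitz_R_fib (m : ℕ) (hm : 2 ≤ m) : R (Nat.fib m) = m / 2 := by
  rw [CarlitzAux.R_eq_cnt, CarlitzAux.cnt_fib m hm]
end

section
/- (Robbins's recursion) Let H ≥ 2 be an integer with Zeckendorf expansion H = F_{m_0} + F_{m_1} + ... + F_{m_k} and suppose k ≥ 1. Then R(H) = t_1·R(x_1) − ε_1·R(x_2). -/
open scoped BigOperators
open Filter Topology

/-- Number of subsets of `{2, ..., M}` (as Fibonacci indices) whose Fibonacci values sum
to `n`. -/
def gcount (M n : ℕ) : ℕ :=
  ((Finset.Icc 2 M).powerset.filter (fun S => ∑ i ∈ S, Nat.fib i = n)).card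

lemma sum_fib_Icc : ∀ M, 1 ≤ M → (∑ i ∈ Finset.Icc 2 M, Nat.fib i) + 2 = Nat.fib (M + 2) := by
  intro M hM
  induction M, hM using Nat.le_induction with
  | base =>
    rw [Finset.Icc_eq_empty (by omega)]
    simp [Nat.fib_add_two]
  | succ M hM ih =>
    rw [← Finset.Ico_add_one_right_eq_Icc, (show Finset.Ico 2 (M + 1 + 1) = insert (M + 1) (Finset.Ico 2 (M + 1)) from
        Nat.Ico_succ_right_eq_insert_Ico (by omega)),
      Finset.sum_insert (by simp), Finset.Ico_add_one_right_eq_Icc]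
    have h1 : Nat.fib (M + 3) = Nat.fib (M + 1) + Nat.fib (M + 2) := Nat.fib_add_two
    rw [show M + 1 + 2 = M + 3 by omega]
    omega

lemma g_eq_zero {M n : ℕ} (hM : 1 ≤ M) (h : Nat.fib (M + 2) ≤ n + 1) : gcount M n = 0 := by
  rw [gcount, Finset.card_eq_zero, Finset.filter_eq_empty_iff]
  intro S hS
  rw [Finset.mem_powerset] at hS
  have h1 : ∑ i ∈ S, Nat.fib i ≤ ∑ i ∈ Finset.Icc 2 M, Nat.fib i :=
    Finset.sum_le_sum_of_subset hS
  have h2 := sum_fib_Icc M hM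
  omega

lemma g_succ {M n : ℕ} (hM : 1 ≤ M) (h : Nat.fib (M + 1) ≤ n) :
    gcount (M + 1) n = gcount M n + gcount M (n - Nat.fib (M + 1)) := by
  classical
  set Aset := (Finset.Icc 2 (M + 1)).powerset.filter (fun S => ∑ i ∈ S, Nat.fib i = n) with hA
  have hsplit := Finset.card_filter_add_card_filter_not
    (s := Aset) (p := fun S => (M + 1) ∈ S)
  have e1 : Aset.filter (fun S => ¬ (M + 1) ∈ S)
      = (Finset.Icc 2 M).powerset.filter (fun S => ∑ i ∈ S, Nat.fib i = n) := by
    ext S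
    simp only [hA, Finset.mem_filter, Finset.mem_powerset]
    constructor
    · rintro ⟨⟨hsub, hsum⟩, hnot⟩
      refine ⟨fun i hi => ?_, hsum⟩
      have h2 := hsub hi
      rw [Finset.mem_Icc] at h2 ⊢
      have h3 : i ≠ M + 1 := fun he => hnot (he ▸ hi)
      omega
    · rintro ⟨hsub, hsum⟩
      have hs : S ⊆ Finset.Icc 2 (M + 1) :=
        hsub.trans (Finset.Icc_subset_Icc_right (by omega))
      have hnot : (M + 1) ∉ S := fun hc => by
        have := hsub hc; rw [Finset.mem_Icc] at this; omega
      exact ⟨⟨hs, hsum⟩, hnot⟩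
  have e2 : (Aset.filter (fun S => (M + 1) ∈ S)).card = gcount M (n - Nat.fib (M + 1)) := by
    rw [gcount]
    refine Finset.card_bij' (fun S _ => S.erase (M + 1)) (fun S _ => insert (M + 1) S)
      ?_ ?_ ?_ ?_
    · intro S hS
      simp only [hA, Finset.mem_filter, Finset.mem_powerset] at hS ⊢
      obtain ⟨⟨hsub, hsum⟩, hmem⟩ := hS
      constructor
      · intro i hi
        have h2 := hsub (Finset.mem_of_mem_erase hi)
        have h3 := Finset.ne_of_mem_erase hi
        rw [Finset.mem_Icc] at h2 ⊢
        omega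
      · have h4 := Finset.add_sum_erase S Nat.fib hmem
        omega
    · intro S hS
      simp only [Finset.mem_filter, Finset.mem_powerset] at hS
      obtain ⟨hsub, hsum⟩ := hS
      have hnot : (M + 1) ∉ S := fun hc => by
        have := hsub hc; rw [Finset.mem_Icc] at this; omega
      simp only [hA, Finset.mem_filter, Finset.mem_powerset]
      refine ⟨⟨?_, ?_⟩, Finset.mem_insert_self _ _⟩
      · intro i hi
        rcases Finset.mem_insert.mp hi with rfl | hi'
        · rw [Finset.mem_Icc]; omega
        · exact (Finset.Icc_subset_Icc_right (by omega)) (hsub hi')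
      · rw [Finset.sum_insert hnot, hsum]; omega
    · intro S hS
      simp only [Finset.mem_filter] at hS
      exact Finset.insert_erase hS.2
    · intro S hS
      simp only [Finset.mem_filter, Finset.mem_powerset] at hS
      have hnot : (M + 1) ∉ S := fun hc => by
        have := hS.1 hc; rw [Finset.mem_Icc] at this; omega
      exact Finset.erase_insert hnot
  have e0 : gcount (M + 1) n = Aset.card := rfl
  have e3 : ((Finset.Icc 2 M).powerset.filter (fun S => ∑ i ∈ S, Nat.fib i = n)).card
      = gcount M n := rfl
  rw [e0, ← hsplit, e1, e2, e3]
  omega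

lemma g_succ' {M n : ℕ} (hM : 2 ≤ M) (h : Nat.fib M ≤ n) :
    gcount M n = gcount (M - 1) n + gcount (M - 1) (n - Nat.fib M) := by
  obtain ⟨M', rfl⟩ : ∃ M', M = M' + 1 := ⟨M - 1, by omega⟩
  simpa using g_succ (by omega) h

lemma R_eq_g {M n : ℕ} (h : n < Nat.fib (M + 1)) : R n = gcount M n := by
  classical
  set F := (Finset.Icc 2 M).powerset.filter (fun S => ∑ i ∈ S, Nat.fib i = n) with hF
  have hmemF : ∀ S, S ∈ F → S ⊆ Finset.Icc 2 M ∧ ∑ i ∈ S, Nat.fib i = n := by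
    intro S hS
    simpa [hF, Finset.mem_filter, Finset.mem_powerset] using hS
  have himg : ∀ S ∈ F, (∀ x ∈ S.image Nat.fib, IsFibNum x) ∧ (∑ x ∈ S.image Nat.fib, x) = n := by
    intro S hS
    obtain ⟨hsub, hsum⟩ := hmemF S hS
    have h2 : ∀ i ∈ S, 2 ≤ i := fun i hi => (Finset.mem_Icc.mp (hsub hi)).1
    constructor
    · intro y hy
      obtain ⟨j, hj, rfl⟩ := Finset.mem_image.mp hy
      exact ⟨j, by have := h2 j hj; omega, rfl⟩
    · rw [Finset.sum_image (fun a ha b hb hab => fib_inj (h2 a ha) (h2 b hb) hab)]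
      exact hsum
  let f : {S : Finset ℕ // S ∈ F} → {S : Finset ℕ // (∀ x ∈ S, IsFibNum x) ∧ (∑ x ∈ S, x) = n} :=
    fun S => ⟨S.1.image Nat.fib, himg S.1 S.2⟩
  have hsubF : ∀ (T T' : Finset ℕ), T ∈ F → T' ∈ F →
      T.image Nat.fib = T'.image Nat.fib → T ⊆ T' := by
    intro T T' hT hT' he j hj
    have h2 : ∀ i ∈ T, 2 ≤ i := fun i hi => (Finset.mem_Icc.mp ((hmemF T hT).1 hi)).1
    have h2' : ∀ i ∈ T', 2 ≤ i := fun i hi => (Finset.mem_Icc.mp ((hmemF T' hT').1 hi)).1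
    have hm : Nat.fib j ∈ T'.image Nat.fib := he ▸ Finset.mem_image_of_mem _ hj
    obtain ⟨j', hj', hee⟩ := Finset.mem_image.mp hm
    rwa [fib_inj (h2' j' hj') (h2 j hj) hee] at hj'
  have hbij : Function.Bijective f := by
    constructor
    · rintro ⟨S, hS⟩ ⟨S', hS'⟩ he
      have he' : S.image Nat.fib = S'.image Nat.fib := congrArg Subtype.val he
      exact Subtype.ext (Finset.Subset.antisymm (hsubF S S' hS hS' he')
        (hsubF S' S hS' hS he'.symm))
    · rintro ⟨V, hFib, hsum⟩
      have hφex : ∀ v ∈ V, ∃ j, 2 ≤ j ∧ Nat.fib j = v := by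
        intro v hv
        obtain ⟨mm, hm0, hfm⟩ := hFib v hv
        rcases Nat.lt_or_ge mm 2 with hc | hc
        · have hmm : mm = 1 := by omega
          refine ⟨2, le_rfl, ?_⟩
          rw [Nat.fib_two, ← hfm, hmm, Nat.fib_one]
        · exact ⟨mm, hc, hfm⟩
      set φ : ℕ → ℕ := fun v => if hh : ∃ j, 2 ≤ j ∧ Nat.fib j = v then hh.choose else 0 with hφ
      have hφspec : ∀ v ∈ V, 2 ≤ φ v ∧ Nat.fib (φ v) = v := by
        intro v hv
        have hex := hφex v hv
        rw [hφ]
        simp only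
        rw [dif_pos hex]
        exact hex.choose_spec
      have hvn : ∀ v ∈ V, v ≤ n := by
        intro v hv
        have h5 := Finset.single_le_sum (f := fun x : ℕ => x) (fun _ _ => Nat.zero_le _) hv
        rw [hsum] at h5
        exact h5
      have hSF : V.image φ ∈ F := by
        rw [hF, Finset.mem_filter, Finset.mem_powerset]
        constructor
        · intro j hj
          obtain ⟨v, hv, rfl⟩ := Finset.mem_image.mp hj
          obtain ⟨h2, hfv⟩ := hφspec v hv
          rw [Finset.mem_Icc]
          refine ⟨h2, ?_⟩
          by_contra hc
          have h6 : Nat.fib (M + 1) ≤ Nat.fib (φ v) := Nat.fib_mono (by omega)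
          have h7 := hvn v hv
          omega
        · rw [Finset.sum_image (fun a ha b hb hab => by
            rw [← (hφspec a ha).2, ← (hφspec b hb).2, hab])]
          rw [Finset.sum_congr rfl (fun v hv => (hφspec v hv).2)]
          exact hsum
      refine ⟨⟨V.image φ, hSF⟩, ?_⟩
      apply Subtype.ext
      show (V.image φ).image Nat.fib = V
      have himid : Finset.image (Nat.fib ∘ φ) V = Finset.image id V :=
        Finset.image_congr (fun v hv => (hφspec v hv).2)
      rw [Finset.image_image, himid, Finset.image_id]
  calc R n = Nat.card {S : Finset ℕ // S ∈ F} := (Nat.card_eq_of_bijective f hbij).symm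
    _ = F.card := Nat.card_eq_finsetCard F
    _ = gcount M n := by rw [gcount, hF]

/-- Robbins's recursion. -/
theorem robbins_recursion
    (H k : ℕ) (m x t : ℕ → ℕ) (ε : ℕ → ℤ)
    (hH : 2 ≤ H) (hk : 1 ≤ k)
    (hexp : H = ∑ i ∈ Finset.range (k + 1), Nat.fib (m i))
    (hgap : ∀ i : ℕ, 1 ≤ i → i ≤ k → m i + 2 ≤ m (i - 1))
    (hmk : 2 ≤ m k)
    (hx : ∀ l : ℕ, l ≤ k + 1 → x l = ∑ i ∈ Finset.Icc l k, Nat.fib (m i))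
    (ht : ∀ i : ℕ, 1 ≤ i → i ≤ k → t i = (m (i - 1) - m i + 2) / 2)
    (hε : ∀ i : ℕ, 1 ≤ i → i ≤ k →
      ε i = 2 * (t i : ℤ) - 1 - (m (i - 1) : ℤ) + (m i : ℤ)) :
    (R H : ℤ) = (t 1 : ℤ) * (R (x 1) : ℤ) - ε 1 * (R (x 2) : ℤ) := by
  classical
  -- every index value is at least 2
  have hm2 : ∀ ℓ, ℓ ≤ k → 2 ≤ m ℓ := by
    have key : ∀ j, j ≤ k → 2 ≤ m (k - j) := by
      intro j
      induction j with
      | zero => intro _; simpa using hmk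
      | succ j ih =>
        intro hj
        have h1 := hgap (k - j) (by omega) (by omega)
        have h2 := ih (by omega)
        have h3 : k - j - 1 = k - (j + 1) := by omega
        rw [h3] at h1
        omega
    intro ℓ hℓ
    have := key (k - ℓ) (by omega)
    rwa [show k - (k - ℓ) = ℓ by omega] at this
  -- tail sums are bounded
  have hbd : ∀ ℓ, ℓ ≤ k → (∑ i ∈ Finset.Icc ℓ k, Nat.fib (m i)) < Nat.fib (m ℓ + 1) := by
    have key : ∀ j, j ≤ k →
        (∑ i ∈ Finset.Icc (k - j) k, Nat.fib (m i)) < Nat.fib (m (k - j) + 1) := by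
      intro j
      induction j with
      | zero =>
        intro _
        simp only [Nat.sub_zero, Finset.Icc_self, Finset.sum_singleton]
        exact Nat.fib_lt_fib_succ hmk
      | succ j ih =>
        intro hj
        have hℓ1 : k - (j + 1) + 1 = k - j := by omega
        have hsum : ∑ i ∈ Finset.Icc (k - (j + 1)) k, Nat.fib (m i)
            = Nat.fib (m (k - (j + 1)))
              + ∑ i ∈ Finset.Icc (k - (j + 1) + 1) k, Nat.fib (m i) := by
          rw [← Finset.Ico_add_one_right_eq_Icc, Finset.sum_eq_sum_Ico_succ_bot (by omega),
            Finset.Ico_add_one_right_eq_Icc]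
        have ih' := ih (by omega)
        rw [← hℓ1] at ih'
        have hg := hgap (k - (j + 1) + 1) (by omega) (by omega)
        rw [show k - (j + 1) + 1 - 1 = k - (j + 1) by omega] at hg
        have hmono : Nat.fib (m (k - (j + 1) + 1) + 1) ≤ Nat.fib (m (k - (j + 1)) - 1) :=
          Nat.fib_mono (by omega)
        have h2 : 2 ≤ m (k - (j + 1)) := hm2 _ (by omega)
        have hfib : Nat.fib (m (k - (j + 1)) + 1)
            = Nat.fib (m (k - (j + 1)) - 1) + Nat.fib (m (k - (j + 1))) := by
          have h5 := Nat.fib_add_two (n := m (k - (j + 1)) - 1)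
          rw [show m (k - (j + 1)) - 1 + 2 = m (k - (j + 1)) + 1 by omega,
            show m (k - (j + 1)) - 1 + 1 = m (k - (j + 1)) by omega] at h5
          exact h5
        omega
    intro ℓ hℓ
    have := key (k - ℓ) (by omega)
    rwa [show k - (k - ℓ) = ℓ by omega] at this
  have hm1 : 2 ≤ m 1 := hm2 1 hk
  have hm01 : m 1 + 2 ≤ m 0 := by
    have := hgap 1 le_rfl hk
    simpa using this
  have hX1def : x 1 = ∑ i ∈ Finset.Icc 1 k, Nat.fib (m i) := hx 1 (by omega)
  have hX2def : x 2 = ∑ i ∈ Finset.Icc 2 k, Nat.fib (m i) := hx 2 (by omega)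
  have hHsplit : H = Nat.fib (m 0) + x 1 := by
    rw [hexp, hX1def, Finset.range_eq_Ico,
      Finset.sum_eq_sum_Ico_succ_bot (by omega), ← Finset.Ico_add_one_right_eq_Icc]
  have hX1split : x 1 = Nat.fib (m 1) + x 2 := by
    rw [hX1def, hX2def, ← Finset.Ico_add_one_right_eq_Icc,
      Finset.sum_eq_sum_Ico_succ_bot (by omega : 1 < k + 1), ← Finset.Ico_add_one_right_eq_Icc]
  have hX1lt : x 1 < Nat.fib (m 1 + 1) := by rw [hX1def]; exact hbd 1 hk
  have hfm1pos : 0 < Nat.fib (m 1) := Nat.fib_pos.mpr (by omega)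
  have hX2lt : x 2 < Nat.fib (m 1 - 1) := by
    rcases Nat.lt_or_ge k 2 with hk2 | hk2
    · have hk1 : k = 1 := by omega
      have hpos : 0 < Nat.fib (m 1 - 1) := Nat.fib_pos.mpr (by omega)
      rw [hX2def, hk1]
      simpa [Finset.Icc_eq_empty (show ¬(2 : ℕ) ≤ 1 by omega)] using hpos
    · have h22 := hbd 2 hk2
      have hg : m 2 + 2 ≤ m 1 := by
        have := hgap 2 (by omega) hk2
        simpa using this
      calc x 2 = ∑ i ∈ Finset.Icc 2 k, Nat.fib (m i) := hX2def
        _ < Nat.fib (m 2 + 1) := h22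
        _ ≤ Nat.fib (m 1 - 1) := Nat.fib_mono (by omega)
  have hRX1 : R (x 1) = gcount (m 1) (x 1) := R_eq_g hX1lt
  have hfle : Nat.fib (m 1) ≤ x 1 := by rw [hX1split]; omega
  -- key relation: R(x₁) = gcount (m₁ - 1) (x₁) + R(x₂)
  have hkey : R (x 1) = gcount (m 1 - 1) (x 1) + R (x 2) := by
    have h1 := g_succ' (M := m 1) (n := x 1) (by omega) hfle
    have h2 : x 1 - Nat.fib (m 1) = x 2 := by rw [hX1split]; omega
    have h3 : R (x 2) = gcount (m 1 - 1) (x 2) := by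
      apply R_eq_g
      rw [show m 1 - 1 + 1 = m 1 by omega]
      exact lt_of_lt_of_le hX2lt (Nat.fib_mono (by omega))
    rw [hRX1, h1, h2, ← h3]
  -- the two-step recursion for T j = gcount j (fib j + x₁)
  have hstep : ∀ j, m 1 ≤ j →
      gcount (j + 2) (Nat.fib (j + 2) + x 1) = R (x 1) + gcount j (Nat.fib j + x 1) := by
    intro j hj
    have hfib2 : Nat.fib (j + 2) = Nat.fib j + Nat.fib (j + 1) := Nat.fib_add_two
    have e1 : gcount (j + 2) (Nat.fib (j + 2) + x 1)
        = gcount (j + 1) (Nat.fib (j + 2) + x 1)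
          + gcount (j + 1) (Nat.fib (j + 2) + x 1 - Nat.fib (j + 2)) := by
      have := g_succ' (M := j + 2) (n := Nat.fib (j + 2) + x 1) (by omega) (by omega)
      simpa using this
    have e2 : Nat.fib (j + 2) + x 1 - Nat.fib (j + 2) = x 1 := by omega
    have e3 : gcount (j + 1) (x 1) = R (x 1) :=
      (R_eq_g (lt_of_lt_of_le hX1lt (Nat.fib_mono (by omega)))).symm
    have e4 : gcount (j + 1) (Nat.fib (j + 2) + x 1)
        = gcount j (Nat.fib (j + 2) + x 1)
          + gcount j (Nat.fib (j + 2) + x 1 - Nat.fib (j + 1)) := by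
      have := g_succ' (M := j + 1) (n := Nat.fib (j + 2) + x 1) (by omega) (by omega)
      simpa using this
    have e5 : gcount j (Nat.fib (j + 2) + x 1) = 0 := g_eq_zero (by omega) (by omega)
    have e6 : Nat.fib (j + 2) + x 1 - Nat.fib (j + 1) = Nat.fib j + x 1 := by omega
    rw [e1, e2, e3, e4, e5, e6]
    omega
  -- base cases
  have hbase1 : gcount (m 1) (Nat.fib (m 1) + x 1) = gcount (m 1 - 1) (x 1) := by
    have e1 := g_succ' (M := m 1) (n := Nat.fib (m 1) + x 1) (by omega) (by omega)
    have e2 : gcount (m 1 - 1) (Nat.fib (m 1) + x 1) = 0 := by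
      apply g_eq_zero (by omega)
      have h5 : Nat.fib (m 1 - 1 + 2)
          = Nat.fib (m 1 - 1) + Nat.fib (m 1 - 1 + 1) := Nat.fib_add_two
      rw [show m 1 - 1 + 1 = m 1 by omega] at h5
      have hle : Nat.fib (m 1 - 1) ≤ Nat.fib (m 1) := Nat.fib_mono (by omega)
      omega
    have e3 : Nat.fib (m 1) + x 1 - Nat.fib (m 1) = x 1 := by omega
    rw [e1, e2, e3]
    omega
  have hbase2 : gcount (m 1 + 1) (Nat.fib (m 1 + 1) + x 1) = R (x 1) := by
    have e1 := g_succ' (M := m 1 + 1) (n := Nat.fib (m 1 + 1) + x 1) (by omega) (by omega)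
    simp only [Nat.add_sub_cancel] at e1
    have e2 : gcount (m 1) (Nat.fib (m 1 + 1) + x 1) = 0 := by
      apply g_eq_zero (by omega)
      have h5 : Nat.fib (m 1 + 2) = Nat.fib (m 1) + Nat.fib (m 1 + 1) := Nat.fib_add_two
      omega
    have e3 : Nat.fib (m 1 + 1) + x 1 - Nat.fib (m 1 + 1) = x 1 := by omega
    rw [e3] at e1
    rw [e1, e2, ← hRX1]
    omega
  -- iterating the two-step recursion
  have hiterate : ∀ s r : ℕ,
      gcount (m 1 + r + 2 * s) (Nat.fib (m 1 + r + 2 * s) + x 1)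
        = s * R (x 1) + gcount (m 1 + r) (Nat.fib (m 1 + r) + x 1) := by
    intro s
    induction s with
    | zero => intro r; simp
    | succ s ih =>
      intro r
      rw [show m 1 + r + 2 * (s + 1) = (m 1 + r + 2 * s) + 2 by omega,
        hstep _ (by omega), ih r]
      ring
  -- assembling: R H = R x₁ + gcount (m₀ - 2) (fib (m₀ - 2) + x₁)
  have hHlt : H < Nat.fib (m 0 + 1) := by
    have h1 : Nat.fib (m 0 + 1) = Nat.fib (m 0 - 1) + Nat.fib (m 0) := by
      have h5 := Nat.fib_add_two (n := m 0 - 1)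
      rw [show m 0 - 1 + 2 = m 0 + 1 by omega, show m 0 - 1 + 1 = m 0 by omega] at h5
      exact h5
    have h2 : x 1 < Nat.fib (m 0 - 1) := lt_of_lt_of_le hX1lt (Nat.fib_mono (by omega))
    rw [hHsplit]; omega
  have hRH : R H = gcount (m 0) H := R_eq_g hHlt
  have e1 := g_succ' (M := m 0) (n := H) (by omega) (by rw [hHsplit]; omega)
  have e2 : H - Nat.fib (m 0) = x 1 := by rw [hHsplit]; omega
  rw [e2] at e1
  have e3 : gcount (m 0 - 1) (x 1) = R (x 1) := by
    symm
    apply R_eq_g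
    rw [show m 0 - 1 + 1 = m 0 by omega]
    exact lt_of_lt_of_le hX1lt (Nat.fib_mono (by omega))
  have e4 := g_succ' (M := m 0 - 1) (n := H) (by omega) (by
    have h7 : Nat.fib (m 0 - 1) ≤ Nat.fib (m 0) := Nat.fib_mono (by omega)
    rw [hHsplit]; omega)
  rw [show m 0 - 1 - 1 = m 0 - 2 by omega] at e4
  have e5 : gcount (m 0 - 2) H = 0 := by
    apply g_eq_zero (by omega)
    rw [show m 0 - 2 + 2 = m 0 by omega, hHsplit]
    omega
  have e6 : H - Nat.fib (m 0 - 1) = Nat.fib (m 0 - 2) + x 1 := by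
    have hf : Nat.fib (m 0) = Nat.fib (m 0 - 2) + Nat.fib (m 0 - 1) := by
      have h5 := Nat.fib_add_two (n := m 0 - 2)
      rw [show m 0 - 2 + 2 = m 0 by omega, show m 0 - 2 + 1 = m 0 - 1 by omega] at h5
      exact h5
    rw [hHsplit, hf]
    omega
  rw [e6] at e4
  have hRH2 : R H = R (x 1) + gcount (m 0 - 2) (Nat.fib (m 0 - 2) + x 1) := by
    omega
  -- t and ε at 1
  have ht1 := ht 1 le_rfl hk
  norm_num at ht1
  have hε1 : ε 1 = 2 * (t 1 : ℤ) - 1 - (m 0 : ℤ) + (m 1 : ℤ) := by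
    have := hε 1 le_rfl hk
    norm_num at this
    exact this
  rcases Nat.even_or_odd (m 0 - m 1 - 2) with ⟨s, hs⟩ | ⟨s, hs⟩
  · -- even gap difference: m₀ = m₁ + 2s + 2
    have hm0eq : m 0 = m 1 + 2 * s + 2 := by omega
    have hiter := hiterate s 0
    simp only [Nat.add_zero] at hiter
    rw [show m 1 + 2 * s = m 0 - 2 by omega] at hiter
    rw [hiter, hbase1] at hRH2
    have ht1v : t 1 = s + 2 := by omega
    have hε1v : ε 1 = 1 := by
      rw [hε1, ht1v]
      push_cast
      omega
    rw [ht1v, hε1v]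
    have hz1 : (R H : ℤ) = (R (x 1) : ℤ)
        + ((s : ℤ) * (R (x 1) : ℤ) + (gcount (m 1 - 1) (x 1) : ℤ)) := by
      exact_mod_cast congrArg (Nat.cast : ℕ → ℤ) hRH2
    have hz2 : (R (x 1) : ℤ) = (gcount (m 1 - 1) (x 1) : ℤ) + (R (x 2) : ℤ) := by
      exact_mod_cast congrArg (Nat.cast : ℕ → ℤ) hkey
    push_cast
    linarith
  · -- odd gap difference: m₀ = m₁ + 2s + 3
    have hm0eq : m 0 = m 1 + 2 * s + 3 := by omega
    have hiter := hiterate s 1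
    rw [show m 1 + 1 + 2 * s = m 0 - 2 by omega] at hiter
    rw [hiter, hbase2] at hRH2
    have ht1v : t 1 = s + 2 := by omega
    have hε1v : ε 1 = 0 := by
      rw [hε1, ht1v]
      push_cast
      omega
    rw [ht1v, hε1v]
    have hz1 : (R H : ℤ) = (R (x 1) : ℤ)
        + ((s : ℤ) * (R (x 1) : ℤ) + (R (x 1) : ℤ)) := by
      exact_mod_cast congrArg (Nat.cast : ℕ → ℤ) hRH2
    push_cast
    linarith
end

section
/- Let H be a positive integer with Zeckendorf expansion H = F_{m_0} + F_{m_1} + ... + F_{m_k} and suppose k ≥ 1. Then for every ℓ with 1 ≤ ℓ ≤ k, R(H) = a_ℓ·R(x_ℓ) − ε_ℓ·a_{ℓ−1}·R(x_{ℓ+1}). -/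
open scoped BigOperators
open Filter Topology

namespace RobbinsAux

lemma fib_lt_fib {a b : ℕ} (ha : 2 ≤ a) (hab : a < b) : Nat.fib a < Nat.fib b :=
  lt_of_lt_of_le (Nat.fib_lt_fib_succ ha) (Nat.fib_mono hab)

lemma fib_inj {a b : ℕ} (ha : 2 ≤ a) (hb : 2 ≤ b) (h : Nat.fib a = Nat.fib b) : a = b := by
  rcases lt_trichotomy a b with hlt | he | hgt
  · exact absurd h (Nat.ne_of_lt (fib_lt_fib ha hlt))
  · exact he
  · exact absurd h.symm (Nat.ne_of_lt (fib_lt_fib hb hgt))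

def creps (n M : ℕ) : Finset (Finset ℕ) :=
  (Finset.Icc 2 M).powerset.filter fun T => ∑ j ∈ T, Nat.fib j = n

def c (n M : ℕ) : ℕ := (creps n M).card

lemma mem_creps {T : Finset ℕ} {n M : ℕ} :
    T ∈ creps n M ↔ T ⊆ Finset.Icc 2 M ∧ ∑ j ∈ T, Nat.fib j = n := by
  simp [creps]

lemma sum_fib_Icc (M : ℕ) (hM : 1 ≤ M) :
    (∑ j ∈ Finset.Icc 2 M, Nat.fib j) + 2 = Nat.fib (M + 2) := by
  induction M, hM using Nat.le_induction with
  | base =>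
      rw [show Finset.Icc 2 1 = ∅ from Finset.Icc_eq_empty (by omega)]
      simp [Nat.fib]
  | succ M hM ih =>
      rw [Finset.sum_Icc_succ_top (by omega)]
      have h2 : Nat.fib (M+1+2) = Nat.fib (M+1) + Nat.fib (M+2) := by
        rw [Nat.fib_add_two, show M+1+1 = M+2 from rfl]
      omega

lemma sum_le_of_subset {T : Finset ℕ} {M : ℕ} (hM : 1 ≤ M) (hT : T ⊆ Finset.Icc 2 M) :
    (∑ j ∈ T, Nat.fib j) + 2 ≤ Nat.fib (M + 2) := by
  have h1 : (∑ j ∈ T, Nat.fib j) ≤ ∑ j ∈ Finset.Icc 2 M, Nat.fib j :=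
    Finset.sum_le_sum_of_subset hT
  have h2 := sum_fib_Icc M hM
  omega

lemma c_add (n M : ℕ) :
    c n (M+1) = ((creps n (M+1)).filter fun T => M+1 ∈ T).card
      + ((creps n (M+1)).filter fun T => M+1 ∉ T).card := by
  rw [c]
  exact (Finset.card_filter_add_card_filter_not _).symm

lemma filter_notmem (n M : ℕ) (hM : 1 ≤ M) :
    (creps n (M+1)).filter (fun T => M+1 ∉ T) = creps n M := by
  ext T
  simp only [Finset.mem_filter, mem_creps]
  constructor
  · rintro ⟨⟨hsub, hsum⟩, hnot⟩
    refine ⟨fun j hj => ?_, hsum⟩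
    have h1 := hsub hj
    have hne : j ≠ M+1 := fun h => hnot (h ▸ hj)
    simp only [Finset.mem_Icc] at h1 ⊢
    omega
  · rintro ⟨hsub, hsum⟩
    have hnot : M+1 ∉ T := fun h => by
      have := hsub h; simp only [Finset.mem_Icc] at this; omega
    exact ⟨⟨fun j hj => by
      have := hsub hj; simp only [Finset.mem_Icc] at this ⊢; omega, hsum⟩, hnot⟩

lemma filter_mem_card (r M : ℕ) (hM : 1 ≤ M) :
    ((creps (Nat.fib (M+1) + r) (M+1)).filter fun T => M+1 ∈ T).card = c r M := by
  rw [c]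
  apply Finset.card_bij (fun T _ => T.erase (M+1))
  · intro T hT
    simp only [Finset.mem_filter, mem_creps] at hT
    obtain ⟨⟨hsub, hsum⟩, hmem⟩ := hT
    rw [mem_creps]
    constructor
    · intro j hj
      have hj' : j ∈ T := Finset.mem_of_mem_erase hj
      have hne : j ≠ M+1 := Finset.ne_of_mem_erase hj
      have := hsub hj'
      simp only [Finset.mem_Icc] at this ⊢
      omega
    · have := Finset.add_sum_erase T Nat.fib hmem
      omega
  · intro T1 h1 T2 h2 he
    simp only [Finset.mem_filter] at h1 h2
    rw [← Finset.insert_erase h1.2, ← Finset.insert_erase h2.2, he]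
  · intro T' hT'
    rw [mem_creps] at hT'
    obtain ⟨hsub, hsum⟩ := hT'
    have hnm : M+1 ∉ T' := fun h => by
      have := hsub h; simp only [Finset.mem_Icc] at this; omega
    refine ⟨insert (M+1) T', ?_, ?_⟩
    · simp only [Finset.mem_filter, mem_creps]
      refine ⟨⟨?_, ?_⟩, Finset.mem_insert_self _ _⟩
      · intro j hj
        rcases Finset.mem_insert.mp hj with rfl | hj
        · simp only [Finset.mem_Icc]; omega
        · have := hsub hj; simp only [Finset.mem_Icc] at this ⊢; omega
      · rw [Finset.sum_insert hnm, hsum]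
    · exact Finset.erase_insert hnm

lemma filter_mem_empty (n M : ℕ) (h : n < Nat.fib (M+1)) :
    (creps n (M+1)).filter (fun T => M+1 ∈ T) = ∅ := by
  rw [Finset.filter_eq_empty_iff]
  intro T hT hmem
  rw [mem_creps] at hT
  have := Finset.single_le_sum (f := Nat.fib) (fun i _ => Nat.zero_le _) hmem
  omega

lemma c_split (r M : ℕ) (hM : 1 ≤ M) :
    c (Nat.fib (M+1) + r) (M+1) = c r M + c (Nat.fib (M+1) + r) M := by
  rw [c_add, filter_mem_card r M hM, filter_notmem _ M hM]
  rfl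

lemma c_of_lt (n M : ℕ) (hM : 1 ≤ M) (h : n < Nat.fib (M+1)) : c n (M+1) = c n M := by
  rw [c_add, filter_mem_empty n M h, filter_notmem n M hM]
  simp [c]

lemma c_force (r M : ℕ) (hM : 1 ≤ M) (h : Nat.fib (M+2) < Nat.fib (M+1) + r + 2) :
    c (Nat.fib (M+1) + r) (M+1) = c r M := by
  rw [c_add, filter_mem_card r M hM]
  have he : (creps (Nat.fib (M+1) + r) (M+1)).filter (fun T => M+1 ∉ T) = ∅ := by
    rw [filter_notmem _ M hM, Finset.eq_empty_iff_forall_notMem]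
    intro T hT
    rw [mem_creps] at hT
    have := sum_le_of_subset hM hT.1
    omega
  rw [he]
  simp

lemma sum_image_fib {T : Finset ℕ} {M : ℕ} (hT : T ⊆ Finset.Icc 2 M) :
    ∑ y ∈ T.image Nat.fib, y = ∑ j ∈ T, Nat.fib j := by
  apply Finset.sum_image
  intro a ha b hb hab
  have h1 := hT ha; have h2 := hT hb
  simp only [Finset.mem_Icc] at h1 h2
  exact fib_inj h1.1 h2.1 hab

lemma image_fib_inj {T1 T2 : Finset ℕ} {M : ℕ} (h1 : T1 ⊆ Finset.Icc 2 M)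
    (h2 : T2 ⊆ Finset.Icc 2 M) (h : T1.image Nat.fib = T2.image Nat.fib) : T1 = T2 := by
  have key : ∀ T1' T2' : Finset ℕ, T1' ⊆ Finset.Icc 2 M → T2' ⊆ Finset.Icc 2 M →
      T1'.image Nat.fib = T2'.image Nat.fib → ∀ j ∈ T1', j ∈ T2' := by
    intro T1' T2' hs1 hs2 he j hj
    have : Nat.fib j ∈ T2'.image Nat.fib := he ▸ Finset.mem_image_of_mem _ hj
    obtain ⟨j', hj', hjj⟩ := Finset.mem_image.mp this
    have e1 := hs1 hj; have e2 := hs2 hj'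
    simp only [Finset.mem_Icc] at e1 e2
    rwa [← fib_inj e2.1 e1.1 hjj]
  ext j
  exact ⟨key T1 T2 h1 h2 h j, key T2 T1 h2 h1 h.symm j⟩

lemma c_eq_R (n M : ℕ) (hM : 1 ≤ M) (h : n < Nat.fib (M+1)) : c n M = R n := by
  rw [R, c, ← Nat.card_eq_finsetCard]
  have key : ∀ T ∈ creps n M,
      (∀ y ∈ T.image Nat.fib, IsFibNum y) ∧ (∑ y ∈ T.image Nat.fib, y) = n := by
    intro T hT
    rw [mem_creps] at hT
    obtain ⟨hsub, hsum⟩ := hT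
    constructor
    · intro y hy
      obtain ⟨j, hj, rfl⟩ := Finset.mem_image.mp hy
      have := hsub hj; simp only [Finset.mem_Icc] at this
      exact ⟨j, by omega, rfl⟩
    · rw [sum_image_fib hsub, hsum]
  refine Nat.card_eq_of_bijective
    (fun T => ⟨T.1.image Nat.fib, key T.1 T.2⟩) ⟨?_, ?_⟩
  · rintro ⟨T1, h1⟩ ⟨T2, h2⟩ he
    simp only [Subtype.mk.injEq] at he
    rw [mem_creps] at h1 h2
    exact Subtype.ext (image_fib_inj h1.1 h2.1 he)
  · rintro ⟨S, hFib, hsum⟩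
    set T := (Finset.Icc 2 M).filter (fun j => Nat.fib j ∈ S) with hTdef
    have hTsub : T ⊆ Finset.Icc 2 M := Finset.filter_subset _ _
    have himg : T.image Nat.fib = S := by
      ext y
      simp only [Finset.mem_image, hTdef, Finset.mem_filter]
      constructor
      · rintro ⟨j, ⟨_, hy⟩, rfl⟩; exact hy
      · intro hy
        obtain ⟨mm, hm0, hfm⟩ := hFib y hy
        have hfj : Nat.fib (max mm 2) = y := by
          rcases Nat.lt_or_ge mm 2 with hlt | hge
          · interval_cases mm
            · simpa [Nat.fib] using hfm
          · rwa [max_eq_left hge]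
        have hyn : y ≤ n := hsum ▸ Finset.single_le_sum (f := fun i => i) (fun i _ => Nat.zero_le _) hy
        have hjM : max mm 2 ≤ M := by
          by_contra hgt
          have h1 : Nat.fib (M+1) ≤ Nat.fib (max mm 2) := Nat.fib_mono (by omega)
          omega
        exact ⟨max mm 2, ⟨Finset.mem_Icc.mpr ⟨le_max_right _ _, hjM⟩, by rw [hfj]; exact hy⟩, hfj⟩
    refine ⟨⟨T, mem_creps.mpr ⟨hTsub, ?_⟩⟩, Subtype.ext himg⟩
    rw [← sum_image_fib hTsub, himg, hsum]
lemma key (p x2 : ℕ) (h2 : x2 < Nat.fib (p+1)) :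
    ∀ e : ℕ, (c (Nat.fib (p+2+e) + (Nat.fib (p+2) + x2)) (p+2+e) : ℤ)
      = (((e+2)/2 : ℕ) : ℤ) * (R (Nat.fib (p+2) + x2) : ℤ)
        - (if e % 2 = 0 then 1 else 0) * (R x2 : ℤ) := by
  have hfib3 : Nat.fib (p+3) = Nat.fib (p+1) + Nat.fib (p+2) := by
    rw [show p+3 = (p+1)+2 from rfl, Nat.fib_add_two, show p+1+1 = p+2 from rfl]
  have hx1 : Nat.fib (p+2) + x2 < Nat.fib (p+3) := by omega
  have hfibpos : 0 < Nat.fib (p+1) := Nat.fib_pos.mpr (by omega)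
  have hRx1 : c (Nat.fib (p+2) + x2) (p+2) = R (Nat.fib (p+2) + x2) :=
    c_eq_R _ (p+2) (by omega) hx1
  have hRx2 : c x2 (p+1) = R x2 :=
    c_eq_R x2 (p+1) (by omega) (lt_of_lt_of_le h2 (Nat.fib_mono (by omega)))
  intro e
  induction e using Nat.strong_induction_on with
  | _ e ih =>
    match e with
    | 0 =>
        have e1 : c (Nat.fib (p+2) + (Nat.fib (p+2) + x2)) (p+2) = c (Nat.fib (p+2) + x2) (p+1) := by
          apply c_force _ (p+1) (by omega)
          rw [show p+1+2 = p+3 from rfl, show p+1+1 = p+2 from rfl]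
          have := Nat.fib_mono (show p+1 ≤ p+2 by omega)
          omega
        have e3 : c (Nat.fib (p+2) + x2) (p+2) = c x2 (p+1) + c (Nat.fib (p+2) + x2) (p+1) :=
          c_split x2 (p+1) (by omega)
        rw [show p+2+0 = p+2 from rfl, e1,
          show ((0+2)/2 : ℕ) = 1 from rfl, if_pos (show (0:ℕ)%2 = 0 from rfl)]
        push_cast
        omega
    | 1 =>
        have e1 : c (Nat.fib (p+3) + (Nat.fib (p+2) + x2)) (p+3) = c (Nat.fib (p+2) + x2) (p+2) := by
          apply c_force _ (p+2) (by omega)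
          rw [show p+2+2 = (p+2)+2 from rfl, Nat.fib_add_two, show p+2+1 = p+3 from rfl]
          omega
        rw [show p+2+1 = p+3 from rfl, e1, hRx1]
        norm_num
    | (e+2) =>
        have hih := ih e (by omega)
        have hsp : c (Nat.fib (p+3+e+1) + (Nat.fib (p+2) + x2)) (p+3+e+1)
            = c (Nat.fib (p+2) + x2) (p+3+e) + c (Nat.fib (p+3+e+1) + (Nat.fib (p+2) + x2)) (p+3+e) :=
          c_split _ (p+3+e) (by omega)
        have hfa : Nat.fib (p+2+e+2) = Nat.fib (p+2+e) + Nat.fib (p+2+e+1) := Nat.fib_add_two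
        have hf1 : c (Nat.fib (p+2) + x2) (p+3+e) = R (Nat.fib (p+2) + x2) :=
          c_eq_R _ _ (by omega) (lt_of_lt_of_le hx1 (Nat.fib_mono (by omega)))
        have hf2 : c (Nat.fib (p+3+e+1) + (Nat.fib (p+2) + x2)) (p+3+e)
            = c (Nat.fib (p+2+e) + (Nat.fib (p+2) + x2)) (p+2+e) := by
          have harg : Nat.fib (p+3+e+1) + (Nat.fib (p+2) + x2)
              = Nat.fib (p+2+e+1) + (Nat.fib (p+2+e) + (Nat.fib (p+2) + x2)) := by
            rw [show p+3+e+1 = p+2+e+2 from by omega]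
            omega
          rw [harg, show p+3+e = p+2+e+1 from by ring]
          apply c_force _ (p+2+e) (by omega)
          rw [show p+2+e+2 = (p+2+e)+2 from rfl]
          omega
        have hidx : p+2+(e+2) = p+3+e+1 := by ring
        have hq : ((e+2+2)/2 : ℕ) = (e+2)/2 + 1 := by omega
        have hm : (e+2) % 2 = e % 2 := by omega
        rw [hidx, hsp, hf1, hf2, hq, hm, Nat.cast_add, Nat.cast_add, Nat.cast_one, hih]
        ring
lemma onestep (m0 m1 x2 : ℕ) (h1 : 2 ≤ m1) (h0 : m1 + 2 ≤ m0) (h2 : x2 < Nat.fib (m1 - 1)) :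
    (R (Nat.fib m0 + (Nat.fib m1 + x2)) : ℤ)
      = (((m0 - m1 + 2)/2 : ℕ) : ℤ) * (R (Nat.fib m1 + x2) : ℤ)
        - (if (m0 - m1) % 2 = 0 then 1 else 0) * (R x2 : ℤ) := by
  obtain ⟨p, rfl⟩ : ∃ p, m1 = p + 2 := ⟨m1 - 2, by omega⟩
  obtain ⟨e, he⟩ : ∃ e, m0 = p + 2 + e := ⟨m0 - (p + 2), by omega⟩
  have hee : 2 ≤ e := by omega
  have h2' : x2 < Nat.fib (p + 1) := by
    rwa [show p + 2 - 1 = p + 1 from rfl] at h2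
  have hfib3 : Nat.fib (p+3) = Nat.fib (p+1) + Nat.fib (p+2) := by
    rw [show p+3 = (p+1)+2 from rfl, Nat.fib_add_two, show p+1+1 = p+2 from rfl]
  have hx1 : Nat.fib (p+2) + x2 < Nat.fib (p+3) := by omega
  have hRc : R (Nat.fib (p+2+e) + (Nat.fib (p+2) + x2))
      = c (Nat.fib (p+2+e) + (Nat.fib (p+2) + x2)) (p+2+e) := by
    refine (c_eq_R _ (p+2+e) (by omega) ?_).symm
    have hmono : Nat.fib (p+3) ≤ Nat.fib (p+1+e) := Nat.fib_mono (by omega)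
    have hadd : Nat.fib (p+2+e+1) = Nat.fib (p+1+e) + Nat.fib (p+2+e) := by
      rw [show p+2+e+1 = (p+1+e)+2 from by omega, Nat.fib_add_two,
        show p+1+e+1 = p+2+e from by omega]
    omega
  subst he
  rw [show p + 2 + e - (p + 2) = e from by omega, hRc]
  exact key p x2 h2' e
end RobbinsAux

/-- Iterated Robbins recursion: `R(H) = a_ℓ R(x_ℓ) - ε_ℓ a_{ℓ-1} R(x_{ℓ+1})` for `1 ≤ ℓ ≤ k`. -/
theorem iterated_robbins_recursion
    (H k : ℕ) (m x t : ℕ → ℕ) (ε a : ℕ → ℤ)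
    (hH : 0 < H) (hk : 1 ≤ k)
    (hexp : H = ∑ i ∈ Finset.range (k + 1), Nat.fib (m i))
    (hgap : ∀ i : ℕ, 1 ≤ i → i ≤ k → m i + 2 ≤ m (i - 1))
    (hmk : 2 ≤ m k)
    (hx : ∀ l : ℕ, l ≤ k + 1 → x l = ∑ i ∈ Finset.Icc l k, Nat.fib (m i))
    (ht : ∀ i : ℕ, 1 ≤ i → i ≤ k → t i = (m (i - 1) - m i + 2) / 2)
    (hε : ∀ i : ℕ, 1 ≤ i → i ≤ k →
      ε i = 2 * (t i : ℤ) - 1 - (m (i - 1) : ℤ) + (m i : ℤ))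
    (ha0 : a 0 = 1)
    (ha1 : a 1 = (t 1 : ℤ))
    (ha : ∀ l : ℕ, 1 ≤ l → l ≤ k - 1 →
      a (l + 1) = (t (l + 1) : ℤ) * a l - ε l * a (l - 1)) :
    ∀ l : ℕ, 1 ≤ l → l ≤ k →
      (R H : ℤ) = a l * (R (x l) : ℤ) - ε l * a (l - 1) * (R (x (l + 1)) : ℤ) := by
  open RobbinsAux in
  -- basic structural facts
  have hmono : ∀ j : ℕ, j + 1 ≤ k → m (j+1) + 2 ≤ m j := by
    intro j hj
    have := hgap (j+1) (by omega) hj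
    simpa using this
  have hm2 : ∀ j, j ≤ k → 2 ≤ m j := by
    have aux : ∀ d j, j + d = k → 2 ≤ m j := by
      intro d
      induction d with
      | zero =>
          intro j hj
          have hjk : j = k := by omega
          rw [hjk]; exact hmk
      | succ d ih =>
          intro j hj
          have h1 := hmono j (by omega)
          omega
    intro j hj; exact aux (k - j) j (by omega)
  have hxk1 : x (k+1) = 0 := by
    rw [hx (k+1) le_rfl, Finset.Icc_eq_empty (by omega), Finset.sum_empty]
  have hxs : ∀ j, j ≤ k → x j = Nat.fib (m j) + x (j+1) := by
    intro j hj
    rw [hx j (by omega), hx (j+1) (by omega)]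
    have hins : Finset.Icc j k = insert j (Finset.Icc (j+1) k) := by
      ext i
      simp only [Finset.mem_Icc, Finset.mem_insert]
      omega
    rw [hins, Finset.sum_insert (by simp only [Finset.mem_Icc]; omega)]
  have hxlt : ∀ j, j ≤ k → x j < Nat.fib (m j + 1) := by
    have aux : ∀ d j, j + d = k → x j < Nat.fib (m j + 1) := by
      intro d
      induction d with
      | zero =>
          intro j hj
          have hjk : j = k := by omega
          rw [hjk, hxs k le_rfl, hxk1]
          simpa using Nat.fib_lt_fib_succ hmk
      | succ d ih =>
          intro j hj
          have hj' : j ≤ k := by omega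
          have hih := ih (j+1) (by omega)
          have hg := hmono j (by omega)
          have h2 := hm2 j hj'
          obtain ⟨q, hq⟩ : ∃ q, m j = q + 2 := ⟨m j - 2, by omega⟩
          have hadd : Nat.fib (q+3) = Nat.fib (q+1) + Nat.fib (q+2) := by
            rw [show q+3 = (q+1)+2 from rfl, Nat.fib_add_two, show q+1+1 = q+2 from rfl]
          have hmon : Nat.fib (m (j+1) + 1) ≤ Nat.fib (q+1) := Nat.fib_mono (by omega)
          rw [hxs j hj', hq, show q+2+1 = q+3 from rfl]
          omega
    intro j hj; exact aux (k - j) j (by omega)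
  have hxlt2 : ∀ j, j ≤ k → x (j+1) < Nat.fib (m j - 1) := by
    intro j hj
    rcases eq_or_lt_of_le hj with rfl | hlt
    · rw [hxk1]
      exact Nat.fib_pos.mpr (by have := hm2 j le_rfl; omega)
    · have h1 := hxlt (j+1) (by omega)
      have h2 := hmono j (by omega)
      have h3 := hm2 j (by omega)
      exact lt_of_lt_of_le h1 (Nat.fib_mono (by omega))
  -- one-step recursion at each level
  have hstep : ∀ j, j + 1 ≤ k →
      (R (x j) : ℤ) = (t (j+1) : ℤ) * (R (x (j+1)) : ℤ) - ε (j+1) * (R (x (j+2)) : ℤ) := by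
    intro j hj
    have h1 : 2 ≤ m (j+1) := hm2 _ hj
    have hgapj : m (j+1) + 2 ≤ m j := hmono j hj
    have hx2 : x (j+2) < Nat.fib (m (j+1) - 1) := hxlt2 (j+1) hj
    have hone := onestep (m j) (m (j+1)) (x (j+2)) h1 hgapj hx2
    have htj : t (j+1) = (m j - m (j+1) + 2) / 2 := by
      have := ht (j+1) (by omega) hj
      simpa using this
    have hej : ε (j+1) = 2 * (t (j+1) : ℤ) - 1 - (m j : ℤ) + (m (j+1) : ℤ) := by
      have := hε (j+1) (by omega) hj
      simpa using this
    have hepsite : ε (j+1) = (if (m j - m (j+1)) % 2 = 0 then (1:ℤ) else 0) := by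
      rw [hej, htj]
      rcases Nat.mod_two_eq_zero_or_one (m j - m (j+1)) with hpar | hpar
      · rw [if_pos hpar]; omega
      · rw [if_neg (by omega)]; omega
    rw [htj, hepsite, hxs j (by omega), hxs (j+1) (by omega)]
    exact hone
  -- main induction
  have hH0 : H = x 0 := by
    rw [hexp, hx 0 (by omega), Finset.range_eq_Ico, Finset.Ico_add_one_right_eq_Icc]
  intro l hl hlk
  induction l, hl using Nat.le_induction with
  | base =>
      have hst := hstep 0 (by omega)
      rw [hH0, show (1:ℕ) - 1 = 0 from rfl, ha0, ha1]
      simpa using hst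
  | succ n hn ih =>
      have hnk : n ≤ k := by omega
      have ihn := ih hnk
      have hst := hstep n (by omega)
      have han : a (n + 1) = (t (n+1) : ℤ) * a n - ε n * a (n - 1) := ha n hn (by omega)
      rw [show n + 1 - 1 = n from rfl]
      calc (R H : ℤ)
          = a n * ((t (n+1) : ℤ) * (R (x (n+1)) : ℤ) - ε (n+1) * (R (x (n+2)) : ℤ))
            - ε n * a (n-1) * (R (x (n+1)) : ℤ) := by rw [← hst]; exact ihn
        _ = a (n+1) * (R (x (n+1)) : ℤ) - ε (n+1) * a n * (R (x (n+2)) : ℤ) := by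
            rw [han]; ring
end

section
/- If m ≥ 3 is an integer and H is an integer with F_m ≤ H < F_{m+1}, then A(H) = A(H − F_m) + A(H − F_{m−1}) − A(H − 2F_{m−1}) + 2^{m−3}. -/
open scoped BigOperators
open Filter Topology

/-- The summatory function extended to integer arguments: `A H = ∑_{n=0}^{H} R n`
for `H ≥ 0`, and `A H = 0` for `H < 0`. -/
noncomputable def AZ (H : ℤ) : ℤ :=
  if H < 0 then 0 else ∑ n ∈ Finset.range (H.toNat + 1), (R n : ℤ)

/-- The ground set of Fibonacci values `F 2, …, F k`. -/
def Fibs (k : ℕ) : Finset ℕ := (Finset.Icc 2 k).image Nat.fib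

/-- The number of subsets of `V` with sum at most `H`. -/
def cnt (V : Finset ℕ) (H : ℕ) : ℕ :=
  (V.powerset.filter (fun S => ∑ x ∈ S, x ≤ H)).card

lemma cnt_insert (a : ℕ) (V : Finset ℕ) (H : ℕ) (ha : a ∉ V) :
    cnt (insert a V) H = cnt V H + if a ≤ H then cnt V (H - a) else 0 := by
  classical
  unfold cnt
  rw [Finset.powerset_insert, Finset.filter_union,
    Finset.card_union_of_disjoint, Finset.filter_image]
  · congr 1
    rw [Finset.card_image_of_injOn]
    · by_cases hH : a ≤ H
      · simp only [hH, if_true]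
        congr 1
        apply Finset.filter_congr
        intro S hS
        rw [Finset.mem_powerset] at hS
        have haS : a ∉ S := fun h => ha (hS h)
        rw [Finset.sum_insert haS]
        constructor <;> intro h <;> omega
      · simp only [hH, if_false]
        rw [Finset.card_eq_zero, Finset.filter_eq_empty_iff]
        intro S hS
        rw [Finset.mem_powerset] at hS
        have haS : a ∉ S := fun h => ha (hS h)
        rw [Finset.sum_insert haS]
        omega
    · intro S hS T hT hST
      simp only [Finset.coe_filter, Set.mem_setOf_eq, Finset.mem_powerset] at hS hT
      have hS1 : a ∉ S := fun h => ha (hS.1 h)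
      have hT1 : a ∉ T := fun h => ha (hT.1 h)
      have := congrArg (fun X => Finset.erase X a) hST
      simpa [Finset.erase_insert hS1, Finset.erase_insert hT1] using this
  · rw [Finset.disjoint_left]
    intro S hS hS'
    simp only [Finset.mem_filter, Finset.mem_powerset, Finset.mem_image] at hS hS'
    obtain ⟨⟨T, hT, rfl⟩, -⟩ := hS'
    exact ha (hS.1 (Finset.mem_insert_self a T))

lemma cnt_all (V : Finset ℕ) (H : ℕ) (h : ∑ x ∈ V, x ≤ H) :
    cnt V H = 2 ^ V.card := by
  classical
  unfold cnt
  rw [Finset.filter_true_of_mem, Finset.card_powerset]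
  intro S hS
  rw [Finset.mem_powerset] at hS
  calc ∑ x ∈ S, x ≤ ∑ x ∈ V, x := Finset.sum_le_sum_of_subset hS
    _ ≤ H := h

lemma Fibs_succ (k : ℕ) (hk : 1 ≤ k) :
    Fibs (k + 1) = insert (Nat.fib (k + 1)) (Fibs k) := by
  have : Finset.Icc 2 (k + 1) = insert (k + 1) (Finset.Icc 2 k) := by
    ext j
    simp only [Finset.mem_Icc, Finset.mem_insert]
    omega
  rw [Fibs, this, Finset.image_insert]; rfl

lemma fib_notMem_Fibs (k : ℕ) : Nat.fib (k + 1) ∉ Fibs k := by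
  intro h
  rw [Fibs, Finset.mem_image] at h
  obtain ⟨j, hj, hfj⟩ := h
  rw [Finset.mem_Icc] at hj
  have : Nat.fib j < Nat.fib (k + 1) := by
    rw [Nat.fib_lt_fib hj.1]; omega
  omega

lemma cnt_Fibs_succ (k : ℕ) (hk : 1 ≤ k) (X : ℕ) :
    cnt (Fibs (k + 1)) X = cnt (Fibs k) X
      + if Nat.fib (k + 1) ≤ X then cnt (Fibs k) (X - Nat.fib (k + 1)) else 0 := by
  rw [Fibs_succ k hk, cnt_insert _ _ _ (fib_notMem_Fibs k)]

lemma mem_Fibs_iff {x k : ℕ} (hx : IsFibNum x) (hxk : x < Nat.fib (k + 1)) :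
    x ∈ Fibs k := by
  obtain ⟨j, hj, rfl⟩ := hx
  rw [Fibs, Finset.mem_image]
  refine ⟨max j 2, ?_, ?_⟩
  · rw [Finset.mem_Icc]
    have hfj : Nat.fib (max j 2) = Nat.fib j := by
      rcases Nat.lt_or_ge j 2 with h | h
      · interval_cases j <;> rfl
      · rw [max_eq_left h]
    constructor
    · exact le_max_right _ _
    · by_contra hc
      push_neg at hc
      have : Nat.fib (k + 1) ≤ Nat.fib (max j 2) := Nat.fib_mono (by omega)
      omega
  · rcases Nat.lt_or_ge j 2 with h | h
    · interval_cases j <;> rfl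
    · rw [max_eq_left h]

lemma isFibNum_of_mem_Fibs {x k : ℕ} (h : x ∈ Fibs k) : IsFibNum x := by
  rw [Fibs, Finset.mem_image] at h
  obtain ⟨j, hj, rfl⟩ := h
  rw [Finset.mem_Icc] at hj
  exact ⟨j, by omega, rfl⟩

lemma sum_Fibs (k : ℕ) (hk : 1 ≤ k) :
    (∑ x ∈ Fibs k, x) + 2 = Nat.fib (k + 2) := by
  induction k with
  | zero => omega
  | succ n ih =>
    rcases Nat.lt_or_ge n 1 with h | h
    · interval_cases n
      simp [Fibs]
      decide
    · rw [Fibs_succ n h, Finset.sum_insert (fib_notMem_Fibs n)]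
      have := ih h
      have h2 : Nat.fib (n + 1 + 2) = Nat.fib (n + 1) + Nat.fib (n + 2) := Nat.fib_add_two
      omega

lemma card_Fibs (k : ℕ) : (Fibs k).card = k - 1 := by
  have hinj : Set.InjOn Nat.fib (Finset.Icc 2 k : Set ℕ) := by
    intro a ha b hb hab
    rw [Finset.coe_Icc, Set.mem_Icc] at ha hb
    exact Nat.fib_strictMonoOn.injOn ha.1 hb.1 hab
  rw [Fibs, Finset.card_image_of_injOn hinj, Nat.card_Icc]
  omega

open Classical in
lemma R_eq (n N : ℕ) (h : n ≤ N) :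
    R n = (((Finset.range (N+1)).powerset).filter
      (fun S => (∀ x ∈ S, IsFibNum x) ∧ ∑ x ∈ S, x = n)).card := by
  classical
  rw [R, ← Nat.card_eq_finsetCard]
  apply Nat.card_congr
  apply Equiv.subtypeEquivRight
  intro S
  simp only [Finset.mem_filter, Finset.mem_powerset]
  constructor
  · rintro ⟨hf, hs⟩
    refine ⟨fun x hx => ?_, hf, hs⟩
    rw [Finset.mem_range]
    have : x ≤ ∑ y ∈ S, y := Finset.single_le_sum (fun y _ => Nat.zero_le y) hx
    omega
  · rintro ⟨-, hf, hs⟩; exact ⟨hf, hs⟩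

open Classical in
lemma A_eq (H : ℕ) :
    A H = (((Finset.range (H+1)).powerset).filter
      (fun S => (∀ x ∈ S, IsFibNum x) ∧ ∑ x ∈ S, x ≤ H)).card := by
  classical
  rw [Finset.card_eq_sum_card_fiberwise (f := fun S => ∑ x ∈ S, x)
    (t := Finset.range (H + 1)) (fun S hS => by
      rw [Finset.mem_coe, Finset.mem_filter] at hS
      exact Finset.mem_coe.2 (Finset.mem_range.2 (Nat.lt_succ_of_le hS.2.2)))]
  rw [A]
  apply Finset.sum_congr rfl
  intro n hn
  rw [Finset.mem_range] at hn
  rw [R_eq n H (by omega)]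
  congr 1
  ext S
  simp only [Finset.mem_filter, Finset.mem_powerset]
  constructor
  · rintro ⟨h1, h2, h3⟩; exact ⟨⟨h1, h2, by omega⟩, h3⟩
  · rintro ⟨⟨h1, h2, h3⟩, h4⟩; exact ⟨h1, h2, h4⟩

lemma A_count (k H : ℕ) (hH : H < Nat.fib (k + 1)) :
    A H = cnt (Fibs k) H := by
  classical
  rw [A_eq, cnt]
  congr 1
  ext S
  simp only [Finset.mem_filter, Finset.mem_powerset]
  constructor
  · rintro ⟨hsub, hfib, hsum⟩
    refine ⟨fun x hx => ?_, hsum⟩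
    have hxs : x ≤ ∑ y ∈ S, y := Finset.single_le_sum (fun y _ => Nat.zero_le y) hx
    exact mem_Fibs_iff (hfib x hx) (by omega)
  · rintro ⟨hsub, hsum⟩
    refine ⟨fun x hx => ?_, fun x hx => isFibNum_of_mem_Fibs (hsub hx), hsum⟩
    have hxs : x ≤ ∑ y ∈ S, y := Finset.single_le_sum (fun y _ => Nat.zero_le y) hx
    rw [Finset.mem_range]; omega

lemma AZ_nonneg (H : ℤ) (h : 0 ≤ H) : AZ H = (A H.toNat : ℤ) := by
  rw [AZ, if_neg (by omega), A]
  push_cast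
  rfl

/-- The key combinatorial recursion for the summatory function. -/
theorem summatory_key_recursion (m : ℕ) (hm : 3 ≤ m) (H : ℤ)
    (h1 : (Nat.fib m : ℤ) ≤ H) (h2 : H < (Nat.fib (m + 1) : ℤ)) :
    AZ H = AZ (H - (Nat.fib m : ℤ)) + AZ (H - (Nat.fib (m - 1) : ℤ))
      - AZ (H - 2 * (Nat.fib (m - 1) : ℤ)) + 2 ^ (m - 3) := by
  obtain ⟨p, rfl⟩ : ∃ p, m = p + 3 := ⟨m - 3, by omega⟩
  have h0 : 0 ≤ H := le_trans (Int.natCast_nonneg _) h1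
  obtain ⟨t, rfl⟩ : ∃ t : ℕ, H = (t : ℤ) := ⟨H.toNat, by omega⟩
  have h1' : Nat.fib (p + 3) ≤ t := by exact_mod_cast h1
  have h2' : t < Nat.fib (p + 4) := by exact_mod_cast h2
  have f1 : Nat.fib (p + 4) = Nat.fib (p + 2) + Nat.fib (p + 3) := Nat.fib_add_two
  have f2 : Nat.fib (p + 3) = Nat.fib (p + 1) + Nat.fib (p + 2) := Nat.fib_add_two
  have f3 : Nat.fib (p + 1) ≤ Nat.fib (p + 2) := Nat.fib_le_fib_succ
  have fbpos : 0 < Nat.fib (p + 2) := Nat.fib_pos.2 (by omega)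
  -- count decompositions
  have hA : A t = cnt (Fibs (p + 3)) t := A_count (p + 3) t h2'
  have s1 := cnt_Fibs_succ (p + 2) (by omega) t
  simp only [show p + 2 + 1 = p + 3 from rfl] at s1
  rw [if_pos h1'] at s1
  have s2 := cnt_Fibs_succ (p + 1) (by omega) (t - Nat.fib (p + 3))
  simp only [show p + 1 + 1 = p + 2 from rfl] at s2
  rw [if_neg (by omega), add_zero] at s2
  have s3 := cnt_Fibs_succ (p + 1) (by omega) t
  simp only [show p + 1 + 1 = p + 2 from rfl] at s3
  rw [if_pos (by omega)] at s3
  have hcntall : cnt (Fibs (p + 1)) t = 2 ^ p := by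
    have hsum := sum_Fibs (p + 1) (by omega)
    simp only [show p + 1 + 2 = p + 3 from rfl] at hsum
    rw [cnt_all _ _ (by omega), card_Fibs]
    simp
  have hAta : A (t - Nat.fib (p + 3)) = cnt (Fibs (p + 1)) (t - Nat.fib (p + 3)) :=
    A_count (p + 1) _ (by
      have e : Nat.fib (p + 1 + 1) = Nat.fib (p + 2) := rfl
      omega)
  have hAtb : A (t - Nat.fib (p + 2)) = cnt (Fibs (p + 2)) (t - Nat.fib (p + 2)) :=
    A_count (p + 2) _ (by
      have e : Nat.fib (p + 2 + 1) = Nat.fib (p + 3) := rfl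
      omega)
  have s4 := cnt_Fibs_succ (p + 1) (by omega) (t - Nat.fib (p + 2))
  simp only [show p + 1 + 1 = p + 2 from rfl] at s4
  -- translate AZ's
  simp only [show p + 3 - 1 = p + 2 from rfl, show p + 3 - 3 = p from rfl]
  have e1 : AZ (t : ℤ) = (A t : ℤ) := by
    rw [AZ_nonneg _ (by positivity)]
    simp
  have e2 : AZ ((t : ℤ) - (Nat.fib (p + 3) : ℤ)) = (A (t - Nat.fib (p + 3)) : ℤ) := by
    rw [AZ_nonneg _ (by omega)]
    have : ((t : ℤ) - (Nat.fib (p + 3) : ℤ)).toNat = t - Nat.fib (p + 3) := by omega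
    rw [this]
  have e3 : AZ ((t : ℤ) - (Nat.fib (p + 2) : ℤ)) = (A (t - Nat.fib (p + 2)) : ℤ) := by
    rw [AZ_nonneg _ (by omega)]
    have : ((t : ℤ) - (Nat.fib (p + 2) : ℤ)).toNat = t - Nat.fib (p + 2) := by omega
    rw [this]
  rw [e1, e2, e3]
  have hpow : ((2 ^ p : ℕ) : ℤ) = (2 : ℤ) ^ p := by push_cast; ring
  by_cases hcase : Nat.fib (p + 2) + Nat.fib (p + 2) ≤ t
  · have e4 : AZ ((t : ℤ) - 2 * (Nat.fib (p + 2) : ℤ))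
        = (A (t - Nat.fib (p + 2) - Nat.fib (p + 2)) : ℤ) := by
      rw [AZ_nonneg _ (by omega)]
      have : ((t : ℤ) - 2 * (Nat.fib (p + 2) : ℤ)).toNat
          = t - Nat.fib (p + 2) - Nat.fib (p + 2) := by omega
      rw [this]
    rw [e4]
    rw [if_pos (by omega)] at s4
    have hAtbb : A (t - Nat.fib (p + 2) - Nat.fib (p + 2))
        = cnt (Fibs (p + 1)) (t - Nat.fib (p + 2) - Nat.fib (p + 2)) :=
      A_count (p + 1) _ (by
        have e : Nat.fib (p + 1 + 1) = Nat.fib (p + 2) := rfl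
        omega)
    have key1 : A t = A (t - Nat.fib (p + 3)) + 2 ^ p
        + cnt (Fibs (p + 1)) (t - Nat.fib (p + 2)) := by omega
    have key2 : A (t - Nat.fib (p + 2))
        = cnt (Fibs (p + 1)) (t - Nat.fib (p + 2))
          + A (t - Nat.fib (p + 2) - Nat.fib (p + 2)) := by omega
    have k1 : (A t : ℤ) = (A (t - Nat.fib (p + 3)) : ℤ) + (2 : ℤ) ^ p
        + (cnt (Fibs (p + 1)) (t - Nat.fib (p + 2)) : ℤ) := by exact_mod_cast key1
    have k2 : (A (t - Nat.fib (p + 2)) : ℤ)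
        = (cnt (Fibs (p + 1)) (t - Nat.fib (p + 2)) : ℤ)
          + (A (t - Nat.fib (p + 2) - Nat.fib (p + 2)) : ℤ) := by exact_mod_cast key2
    omega
  · have e4 : AZ ((t : ℤ) - 2 * (Nat.fib (p + 2) : ℤ)) = 0 := by
      rw [AZ, if_pos (by omega)]
    rw [e4]
    rw [if_neg (by omega), add_zero] at s4
    have key1 : A t = A (t - Nat.fib (p + 3)) + 2 ^ p + A (t - Nat.fib (p + 2)) := by omega
    have k1 : (A t : ℤ) = (A (t - Nat.fib (p + 3)) : ℤ) + (2 : ℤ) ^ p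
        + (A (t - Nat.fib (p + 2)) : ℤ) := by exact_mod_cast key1
    omega
end

section
/- A(F_m) is asymptotic to 2^m/6 as m → ∞; that is, lim_{m→∞} A(F_m)/2^m = 1/6. -/
open scoped BigOperators
open Filter Topology

namespace FibCount

open Finset

/-- Count of index sets `I ⊆ [2, m]` with `∑_{i ∈ I} F_i ≤ t`. -/
def G (m t : ℕ) : ℕ :=
  (((Finset.Icc 2 m).powerset).filter (fun I => ∑ i ∈ I, Nat.fib i ≤ t)).card

lemma isFibNum_pos {x : ℕ} (hx : IsFibNum x) : 0 < x := by
  obtain ⟨m, hm, rfl⟩ := hx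
  exact Nat.fib_pos.2 hm

open Classical in
/-- `A H` as the cardinality of a single finset. -/
lemma A_eq_card (H : ℕ) :
    A H = (((Finset.range (H + 1)).powerset).filter
      (fun S => (∀ x ∈ S, IsFibNum x) ∧ ∑ x ∈ S, x ≤ H)).card := by
  classical
  set T := ((Finset.range (H + 1)).powerset).filter
      (fun S => (∀ x ∈ S, IsFibNum x) ∧ ∑ x ∈ S, x ≤ H) with hT
  have hfib : T.card = ∑ n ∈ Finset.range (H + 1),
      (T.filter (fun S => (∑ x ∈ S, x) = n)).card := by
    apply Finset.card_eq_sum_card_fiberwise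
    intro S hS
    rw [hT, mem_coe, mem_filter] at hS
    exact mem_range.2 (Nat.lt_succ_of_le hS.2.2)
  rw [A, hfib]
  apply Finset.sum_congr rfl
  intro n hn
  have hnH : n ≤ H := Nat.lt_succ_iff.1 (mem_range.1 hn)
  rw [R, ← Nat.card_eq_finsetCard]
  apply Nat.card_congr
  apply Equiv.subtypeEquivRight
  intro S
  simp only [hT, mem_filter, mem_powerset]
  constructor
  · rintro ⟨hfibS, hsum⟩
    refine ⟨⟨?_, hfibS, hsum ▸ hnH⟩, hsum⟩
    intro x hx
    have hx1 : x ≤ ∑ y ∈ S, y := Finset.single_le_sum (fun y _ => Nat.zero_le y) hx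
    rw [hsum] at hx1
    exact mem_range.2 (Nat.lt_succ_of_le (hx1.trans hnH))
  · rintro ⟨⟨_, hfibS, _⟩, hsum⟩
    exact ⟨hfibS, hsum⟩

/-- The canonical index (`≥ 2`) of a Fibonacci number. -/
noncomputable def fibIdx (x : ℕ) : ℕ := sInf {k | 2 ≤ k ∧ Nat.fib k = x}

lemma fibIdx_spec {x : ℕ} (hx : IsFibNum x) :
    2 ≤ fibIdx x ∧ Nat.fib (fibIdx x) = x := by
  obtain ⟨m, hm, rfl⟩ := hx
  have hne : ∃ k, k ∈ {k | 2 ≤ k ∧ Nat.fib k = Nat.fib m} := by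
    rcases Nat.lt_or_ge m 2 with h | h
    · interval_cases m
      exact ⟨2, by norm_num, by norm_num⟩
    · exact ⟨m, h, rfl⟩
  exact Nat.sInf_mem hne

lemma fibIdx_fib {i : ℕ} (hi : 2 ≤ i) : fibIdx (Nat.fib i) = i := by
  have hmem : fibIdx (Nat.fib i) ∈ {k | 2 ≤ k ∧ Nat.fib k = Nat.fib i} :=
    Nat.sInf_mem ⟨i, hi, rfl⟩
  exact Nat.fib_strictMonoOn.injOn hmem.1 hi hmem.2

/-- `A (F_m)` equals the index-set count `G m (F_m)`. -/
lemma A_fib_eq_G {m : ℕ} (hm : 2 ≤ m) : A (Nat.fib m) = G m (Nat.fib m) := by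
  classical
  rw [A_eq_card, G]
  apply Finset.card_nbij' (i := fun S => S.image fibIdx) (j := fun I => I.image Nat.fib)
  · -- forward map lands in target
    intro S hS
    rw [mem_coe, mem_filter, mem_powerset] at hS ⊢
    obtain ⟨hsub, hfibS, hsum⟩ := hS
    have hIdxinj : ∀ x ∈ S, ∀ y ∈ S, fibIdx x = fibIdx y → x = y := by
      intro x hx y hy hxy
      rw [← (fibIdx_spec (hfibS x hx)).2, ← (fibIdx_spec (hfibS y hy)).2, hxy]
    have hle : ∀ x ∈ S, x ≤ Nat.fib m := by
      intro x hx
      exact (Finset.single_le_sum (fun y _ => Nat.zero_le y) hx).trans hsum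
    constructor
    · intro k hk
      rw [mem_image] at hk
      obtain ⟨x, hx, rfl⟩ := hk
      have h2 := (fibIdx_spec (hfibS x hx)).1
      have hfx := (fibIdx_spec (hfibS x hx)).2
      rw [mem_Icc]
      refine ⟨h2, ?_⟩
      by_contra hgt
      push_neg at hgt
      have : Nat.fib m < Nat.fib (fibIdx x) := (Nat.fib_lt_fib hm).2 hgt
      rw [hfx] at this
      exact absurd (hle x hx) (not_le.2 this)
    · rw [Finset.sum_image hIdxinj]
      calc ∑ x ∈ S, Nat.fib (fibIdx x) = ∑ x ∈ S, x :=
            Finset.sum_congr rfl (fun x hx => (fibIdx_spec (hfibS x hx)).2)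
        _ ≤ Nat.fib m := hsum
  · -- backward map lands in source
    intro I hI
    rw [mem_coe, mem_filter, mem_powerset] at hI ⊢
    obtain ⟨hsub, hsum⟩ := hI
    have hidx : ∀ i ∈ I, 2 ≤ i ∧ i ≤ m := by
      intro i hi
      exact mem_Icc.1 (hsub hi)
    have hfibinj : ∀ i ∈ I, ∀ j ∈ I, Nat.fib i = Nat.fib j → i = j := by
      intro i hi j hj hij
      exact Nat.fib_strictMonoOn.injOn (hidx i hi).1 (hidx j hj).1 hij
    have hsum' : ∑ x ∈ I.image Nat.fib, x = ∑ i ∈ I, Nat.fib i :=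
      Finset.sum_image hfibinj
    refine ⟨?_, ?_, ?_⟩
    · intro x hx
      rw [mem_image] at hx
      obtain ⟨i, hi, rfl⟩ := hx
      have : Nat.fib i ≤ Nat.fib m := Nat.fib_mono (hidx i hi).2
      exact mem_range.2 (Nat.lt_succ_of_le this)
    · intro x hx
      rw [mem_image] at hx
      obtain ⟨i, hi, rfl⟩ := hx
      refine ⟨i, ?_, rfl⟩
      have := (hidx i hi).1
      omega
    · rw [hsum']; exact hsum
  · -- left inverse
    intro S hS
    rw [mem_coe, mem_filter, mem_powerset] at hS
    obtain ⟨_, hfibS, _⟩ := hS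
    beta_reduce; rw [Finset.image_image]
    calc S.image (Nat.fib ∘ fibIdx) = S.image id :=
          Finset.image_congr (fun x hx => (fibIdx_spec (hfibS x hx)).2)
      _ = S := Finset.image_id
  · -- right inverse
    intro I hI
    rw [mem_coe, mem_filter, mem_powerset] at hI
    beta_reduce; rw [Finset.image_image]
    calc I.image (fibIdx ∘ Nat.fib) = I.image id :=
          Finset.image_congr (fun i hi => fibIdx_fib (mem_Icc.1 (hI.1 hi)).1)
      _ = I := Finset.image_id

lemma G_zero (k : ℕ) : G k 0 = 1 := by
  rw [G]
  have : ((Finset.Icc 2 k).powerset).filter (fun I => ∑ i ∈ I, Nat.fib i ≤ 0)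
      = {∅} := by
    ext I
    simp only [mem_filter, mem_powerset, mem_singleton, Nat.le_zero,
      Finset.sum_eq_zero_iff]
    constructor
    · rintro ⟨hsub, hzero⟩
      rw [Finset.eq_empty_iff_forall_notMem]
      intro i hi
      have h2 : 2 ≤ i := (mem_Icc.1 (hsub hi)).1
      have := hzero i hi
      have : 0 < Nat.fib i := Nat.fib_pos.2 (by omega)
      omega
    · rintro rfl
      exact ⟨Finset.empty_subset _, by simp⟩
  rw [this, card_singleton]

lemma G_split (m t : ℕ) (hm : 1 ≤ m) (ht : Nat.fib (m + 1) ≤ t) :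
    G (m + 1) t = G m t + G m (t - Nat.fib (m + 1)) := by
  classical
  have hins : Finset.Icc 2 (m + 1) = insert (m + 1) (Finset.Icc 2 m) :=
    (Finset.insert_Icc_right_eq_Icc_add_one (by omega)).symm
  have hnotmem : m + 1 ∉ Finset.Icc 2 m := by
    rw [mem_Icc]; omega
  rw [G, hins, Finset.powerset_insert, Finset.filter_union]
  rw [Finset.card_union_of_disjoint]
  · congr 1
    rw [Finset.filter_image]
    rw [Finset.card_image_of_injOn]
    · rw [G]
      congr 1
      apply Finset.filter_congr
      intro I hI
      rw [mem_powerset] at hI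
      have hnI : m + 1 ∉ I := fun h => hnotmem (hI h)
      rw [Finset.sum_insert hnI]
      omega
    · intro I hI J hJ hIJ
      simp only [coe_filter, Set.mem_setOf_eq, mem_powerset] at hI hJ
      have hnI : m + 1 ∉ I := fun h => hnotmem (hI.1 h)
      have hnJ : m + 1 ∉ J := fun h => hnotmem (hJ.1 h)
      rw [← Finset.erase_insert hnI, ← Finset.erase_insert hnJ, hIJ]
  · rw [Finset.disjoint_left]
    intro I hI hI'
    rw [mem_filter, mem_powerset] at hI
    rw [mem_filter, mem_image] at hI'
    obtain ⟨⟨J, _, rfl⟩, _⟩ := hI'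
    exact hnotmem (hI.1 (Finset.mem_insert_self _ _))

lemma sum_fib_Icc {k : ℕ} (hk : 1 ≤ k) :
    (∑ i ∈ Finset.Icc 2 k, Nat.fib i) + 2 = Nat.fib (k + 2) := by
  induction k with
  | zero => omega
  | succ n ih =>
    rcases Nat.lt_or_ge n 1 with h | h
    · interval_cases n
      decide
    · have hins : Finset.Icc 2 (n + 1) = insert (n + 1) (Finset.Icc 2 n) :=
        (Finset.insert_Icc_right_eq_Icc_add_one (by omega)).symm
      have hnotmem : n + 1 ∉ Finset.Icc 2 n := by rw [mem_Icc]; omega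
      rw [hins, Finset.sum_insert hnotmem]
      have hg : n + 1 + 2 = n + 3 := by omega
      rw [hg]
      have := ih h
      have hfib : Nat.fib (n + 3) = Nat.fib (n + 1) + Nat.fib (n + 2) :=
        Nat.fib_add_two
      omega

lemma G_all {k t : ℕ} (ht : Nat.fib (k + 2) ≤ t + 2) : G k t = 2 ^ (k - 1) := by
  rcases Nat.lt_or_ge k 1 with h | h
  · interval_cases k
    rw [G]
    simp [Finset.filter_singleton]
  · have hsum : (∑ i ∈ Finset.Icc 2 k, Nat.fib i) ≤ t := by
      have := sum_fib_Icc h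
      omega
    rw [G]
    rw [Finset.filter_true_of_mem]
    · rw [Finset.card_powerset, Nat.card_Icc]
      have he : k + 1 - 2 = k - 1 := by omega
      rw [he]
    · intro I hI
      rw [mem_powerset] at hI
      calc ∑ i ∈ I, Nat.fib i ≤ ∑ i ∈ Finset.Icc 2 k, Nat.fib i :=
            Finset.sum_le_sum_of_subset hI
        _ ≤ t := hsum

/-- Key recurrence: `A(F_{k+2}) = A(F_k) + 2^{k-1} + 1` for `k ≥ 2`. -/
lemma A_fib_rec {k : ℕ} (hk : 2 ≤ k) :
    A (Nat.fib (k + 2)) = A (Nat.fib k) + 2 ^ (k - 1) + 1 := by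
  have h1 : A (Nat.fib (k + 2)) = G (k + 2) (Nat.fib (k + 2)) :=
    A_fib_eq_G (by omega)
  have h2 : G (k + 2) (Nat.fib (k + 2))
      = G (k + 1) (Nat.fib (k + 2)) + G (k + 1) 0 := by
    have h := G_split (k + 1) (Nat.fib (k + 2)) (by omega) le_rfl
    rw [Nat.sub_self] at h
    exact h
  have h3 : G (k + 1) (Nat.fib (k + 2))
      = G k (Nat.fib (k + 2)) + G k (Nat.fib k) := by
    have hle : Nat.fib (k + 1) ≤ Nat.fib (k + 2) := Nat.fib_mono (by omega)
    have := G_split k (Nat.fib (k + 2)) (by omega) hle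
    have hsub : Nat.fib (k + 2) - Nat.fib (k + 1) = Nat.fib k := by
      have : Nat.fib (k + 2) = Nat.fib k + Nat.fib (k + 1) := Nat.fib_add_two
      omega
    rw [hsub] at this
    exact this
  have h4 : G k (Nat.fib (k + 2)) = 2 ^ (k - 1) := by
    apply G_all
    omega
  have h5 : G k (Nat.fib k) = A (Nat.fib k) := (A_fib_eq_G hk).symm
  rw [h1, h2, h3, h4, h5, G_zero]
  omega

lemma A_fib_closed : ∀ n : ℕ,
    (6 * A (Nat.fib (n + 3)) = 2 ^ (n + 3) + 3 * (n + 3)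
        + (if (n + 3) % 2 = 0 then 2 else 1))
    ∧ (6 * A (Nat.fib (n + 4)) = 2 ^ (n + 4) + 3 * (n + 4)
        + (if (n + 4) % 2 = 0 then 2 else 1)) := by
  have base3 : A (Nat.fib 3) = 3 := by
    rw [A_fib_eq_G (by norm_num)]
    decide
  have base4 : A (Nat.fib 4) = 5 := by
    rw [A_fib_eq_G (by norm_num)]
    decide
  intro n
  induction n with
  | zero =>
    constructor
    · rw [base3]; norm_num
    · rw [base4]; norm_num
  | succ n ih =>
    refine ⟨ih.2, ?_⟩
    have hrec : A (Nat.fib (n + 5)) = A (Nat.fib (n + 3)) + 2 ^ (n + 2) + 1 := by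
      have := A_fib_rec (k := n + 3) (by omega)
      simpa [show n + 3 + 2 = n + 5 by omega, show n + 3 - 1 = n + 2 by omega]
        using this
    have h1 := ih.1
    have hmod : (n + 1 + 4) % 2 = (n + 3) % 2 := by omega
    have hpow : (2 : ℕ) ^ (n + 5) = 2 ^ (n + 3) + 6 * 2 ^ (n + 2) := by ring
    have : n + 1 + 4 = n + 5 := by omega
    rw [this, hrec, hmod]
    omega

lemma A_fib_closed' {m : ℕ} (hm : 3 ≤ m) :
    6 * A (Nat.fib m) = 2 ^ m + 3 * m + (if m % 2 = 0 then 2 else 1) := by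
  obtain ⟨n, rfl⟩ : ∃ n, m = n + 3 := ⟨m - 3, by omega⟩
  exact (A_fib_closed n).1

end FibCount

/-- `A(F_m) ~ 2^m / 6` as `m → ∞`. -/
theorem summatory_at_fib_asymptotic :
    Tendsto (fun m : ℕ => (A (Nat.fib m) : ℝ) / 2 ^ m) atTop (𝓝 (1 / 6)) := by
  have hupper_fun : Tendsto
      (fun m : ℕ => ((2 : ℝ) ^ m + 3 * m + 2) / (6 * 2 ^ m)) atTop (𝓝 (1 / 6)) := by
    have heq : ∀ m : ℕ, ((2 : ℝ) ^ m + 3 * m + 2) / (6 * 2 ^ m)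
        = 1 / 6 + (1 / 2) * ((m : ℝ) / 2 ^ m) + (1 / 3) * ((1 / 2 : ℝ)) ^ m := by
      intro m
      have h2 : (2 : ℝ) ^ m ≠ 0 := by positivity
      have h3 : ((1 / 2 : ℝ)) ^ m * 2 ^ m = 1 := by rw [← mul_pow]; norm_num
      field_simp
      linear_combination (-12) * h3
    have h1 : Tendsto (fun m : ℕ => ((m : ℝ) / 2 ^ m)) atTop (𝓝 0) := by
      have := tendsto_pow_const_div_const_pow_of_one_lt 1 (by norm_num : (1 : ℝ) < 2)
      simpa using this
    have h2 : Tendsto (fun m : ℕ => ((1 / 2 : ℝ)) ^ m) atTop (𝓝 0) :=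
      tendsto_pow_atTop_nhds_zero_of_lt_one (by norm_num) (by norm_num)
    have := ((tendsto_const_nhds (x := (1 / 6 : ℝ))).add
      ((h1.const_mul (1 / 2)))).add (h2.const_mul (1 / 3))
    simp only [mul_zero, add_zero] at this
    exact Tendsto.congr (fun m => (heq m).symm) this
  apply tendsto_of_tendsto_of_tendsto_of_le_of_le'
    (tendsto_const_nhds (x := (1 / 6 : ℝ))) hupper_fun
  · -- lower bound eventually
    filter_upwards [eventually_ge_atTop 3] with m hm
    have h := FibCount.A_fib_closed' hm
    have hc : 2 ^ m ≤ 6 * A (Nat.fib m) := by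
      rcases Nat.even_or_odd m with he | ho
      · rw [h]; split <;> omega
      · rw [h]; split <;> omega
    have hcast : (2 : ℝ) ^ m ≤ 6 * (A (Nat.fib m) : ℝ) := by
      have := (Nat.cast_le (α := ℝ)).2 hc
      push_cast at this
      linarith
    have hpos : (0 : ℝ) < 2 ^ m := by positivity
    rw [div_le_div_iff₀ (by norm_num) hpos]
    linarith
  · -- upper bound eventually
    filter_upwards [eventually_ge_atTop 3] with m hm
    have h := FibCount.A_fib_closed' hm
    have hc : 6 * A (Nat.fib m) ≤ 2 ^ m + 3 * m + 2 := by
      rw [h]; split <;> omega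
    have hcast : 6 * (A (Nat.fib m) : ℝ) ≤ 2 ^ m + 3 * m + 2 := by
      have := (Nat.cast_le (α := ℝ)).2 hc
      push_cast at this
      linarith
    have hpos : (0 : ℝ) < 2 ^ m := by positivity
    rw [div_le_div_iff₀ hpos (by positivity)]
    nlinarith [hpos]
end

section
/- Let t ≥ 2 and m ≥ 2t be integers, and let x be an integer with F_{m−2t+1} ≤ x < F_{m−2t+3}. Then A(F_m + x) = t·A(x) − A(x − F_{m−2t+2}) + f(t)·2^{m−2t}. -/
open scoped BigOperators
open Filter Topology

/-- `f t = 1 + 2(4^{t-1} - 1)/3` (an integer for `t ≥ 1`). -/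
def fInt (t : ℕ) : ℤ := 1 + 2 * (4 ^ (t - 1) - 1) / 3

/-! ### auxiliary counting function -/

def C : ℕ → ℕ → ℕ
  | 0, _ => 1
  | 1, _ => 1
  | (k+2), y => C (k+1) y + if Nat.fib (k+2) ≤ y then C (k+1) (y - Nat.fib (k+2)) else 0

lemma C_succ (k y : ℕ) :
    C (k+2) y = C (k+1) y + if Nat.fib (k+2) ≤ y then C (k+1) (y - Nat.fib (k+2)) else 0 := rfl

def V (k : ℕ) : Finset ℕ := (Finset.Icc 2 k).image Nat.fib

lemma fib_not_mem_V (k : ℕ) : Nat.fib (k+2) ∉ V (k+1) := by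
  simp only [V, Finset.mem_image, Finset.mem_Icc, not_exists]
  rintro i ⟨⟨hi2, hik⟩, hfib⟩
  have h1 : Nat.fib i ≤ Nat.fib (k+1) := Nat.fib_mono (by omega)
  have h2 : Nat.fib (k+1) < Nat.fib (k+2) := Nat.fib_lt_fib_succ (by omega)
  omega

lemma V_succ (k : ℕ) : V (k+2) = insert (Nat.fib (k+2)) (V (k+1)) := by
  unfold V
  rw [show Finset.Icc 2 (k+2) = insert (k+2) (Finset.Icc 2 (k+1)) by
    ext i; simp [Finset.mem_Icc]; omega]
  rw [Finset.image_insert]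

lemma count_eq_C (k y : ℕ) :
    ((V k).powerset.filter (fun S => ∑ x ∈ S, x ≤ y)).card = C k y := by
  induction k using Nat.strong_induction_on generalizing y with
  | _ k ih =>
    match k with
    | 0 =>
      have : V 0 = ∅ := by simp [V]
      rw [this]; simp only [Finset.powerset_empty]
      rw [Finset.filter_singleton, if_pos (by simp)]
      simp [C]
    | 1 =>
      have : V 1 = ∅ := by simp [V]
      rw [this]; simp only [Finset.powerset_empty]
      rw [Finset.filter_singleton, if_pos (by simp)]
      simp [C]
    | (k+2) =>
      rw [Finset.card_filter, V_succ,
        Finset.sum_powerset_insert (fib_not_mem_V k)]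
      rw [C_succ, ← Finset.card_filter, ih (k+1) (by omega)]
      congr 1
      have hnm := fib_not_mem_V k
      by_cases hle : Nat.fib (k+2) ≤ y
      · rw [if_pos hle, ← ih (k+1) (by omega), Finset.card_filter]
        apply Finset.sum_congr rfl
        intro S hS
        rw [Finset.mem_powerset] at hS
        have : Nat.fib (k+2) ∉ S := fun h => hnm (hS h)
        rw [Finset.sum_insert this]
        exact if_congr (by omega) rfl rfl
      · rw [if_neg hle]
        apply Finset.sum_eq_zero
        intro S hS
        rw [Finset.mem_powerset] at hS
        have : Nat.fib (k+2) ∉ S := fun h => hnm (hS h)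
        rw [Finset.sum_insert this, if_neg (by omega)]

lemma R_eq_s9 (k n : ℕ) (hk : 2 ≤ k) (hn : n < Nat.fib (k+1)) :
    R n = ((V k).powerset.filter (fun S => ∑ x ∈ S, x = n)).card := by
  have hiff : ∀ S : Finset ℕ,
      ((∀ x ∈ S, IsFibNum x) ∧ (∑ x ∈ S, x) = n) ↔
        S ∈ (V k).powerset.filter (fun S => ∑ x ∈ S, x = n) := by
    intro S
    rw [Finset.mem_filter, Finset.mem_powerset]
    constructor
    · rintro ⟨hfib, hsum⟩
      refine ⟨fun x hx => ?_, hsum⟩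
      obtain ⟨j, hj0, hjx⟩ := hfib x hx
      have hxle : x ≤ n := by
        rw [← hsum]
        exact Finset.single_le_sum (f := fun y => y) (fun i _ => Nat.zero_le i) hx
      have hxpos : 0 < x := hjx ▸ (Nat.fib_pos.mpr hj0)
      simp only [V, Finset.mem_image, Finset.mem_Icc]
      rcases le_or_gt 2 j with hj2 | hj2
      · refine ⟨j, ⟨hj2, ?_⟩, hjx⟩
        by_contra hjk
        have : Nat.fib (k+1) ≤ Nat.fib j := Nat.fib_mono (by omega)
        omega
      · refine ⟨2, ⟨le_refl 2, hk⟩, ?_⟩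
        interval_cases j
        · simpa using hjx
    · rintro ⟨hsub, hsum⟩
      refine ⟨fun x hx => ?_, hsum⟩
      obtain ⟨i, hi, hfx⟩ := Finset.mem_image.mp (hsub hx)
      exact ⟨i, by simp [Finset.mem_Icc] at hi; omega, hfx⟩
  rw [R, Nat.card_congr (Equiv.subtypeEquivRight hiff), Nat.card_eq_fintype_card,
    Fintype.card_coe]

lemma A_eq_count (k H : ℕ) (hk : 2 ≤ k) (hH : H < Nat.fib (k+1)) :
    A H = ((V k).powerset.filter (fun S => ∑ x ∈ S, x ≤ H)).card := by
  rw [Finset.card_eq_sum_card_fiberwise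
    (f := fun S => ∑ x ∈ S, x) (t := Finset.range (H+1))
    (fun S hS => by
      rw [Finset.mem_coe, Finset.mem_range]
      exact Nat.lt_succ_of_le (Finset.mem_filter.mp hS).2)]
  rw [A]
  apply Finset.sum_congr rfl
  intro n hn
  rw [Finset.mem_range] at hn
  rw [R_eq_s9 k n hk (by omega), Finset.filter_filter]
  congr 1
  apply Finset.filter_congr
  intro S _
  omega

lemma A_eq_C (k H : ℕ) (hk : 1 ≤ k) (hH : H < Nat.fib (k+1)) : A H = C k H := by
  rcases le_or_gt 2 k with h2 | h2
  · rw [A_eq_count k H h2 hH, count_eq_C]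
  · have hk1 : k = 1 := by omega
    subst hk1
    have hH0 : H = 0 := by
      have : Nat.fib (1+1) = 1 := rfl
      omega
    subst hH0
    have h1 : A 0 = C 2 0 := by
      rw [A_eq_count 2 0 le_rfl (by decide), count_eq_C]
    rw [h1, C_succ, if_neg (by decide), Nat.add_zero]

/-! ### arithmetic lemmas about `C` -/

lemma C_full (k y : ℕ) (h : Nat.fib (k+2) ≤ y + 2) : C k y = 2 ^ (k - 1) := by
  induction k using Nat.strong_induction_on generalizing y with
  | _ k ih =>
    match k with
    | 0 => rfl
    | 1 => rfl
    | (k+2) =>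
      have hn1 : Nat.fib (k+2+2) = Nat.fib (k+4) := rfl
      have hn2 : Nat.fib (k+1+2) = Nat.fib (k+3) := rfl
      have h32 : 2 ≤ Nat.fib (k+3) := by
        have := Nat.fib_mono (show 3 ≤ k+3 by omega); simpa [Nat.fib] using this
      have hadd : Nat.fib (k+4) = Nat.fib (k+2) + Nat.fib (k+3) := Nat.fib_add_two
      have h1 : Nat.fib (k+2) ≤ y := by omega
      have h2 : Nat.fib (k+3) ≤ y + 2 := by omega
      have h3 : Nat.fib (k+3) ≤ (y - Nat.fib (k+2)) + 2 := by omega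
      rw [C_succ, if_pos h1, ih (k+1) (by omega) y h2, ih (k+1) (by omega) _ h3]
      have : k + 2 - 1 = (k+1-1) + 1 := by omega
      rw [this, pow_succ]
      omega

lemma C_stable (a b y : ℕ) (hab : a ≤ b) (hy : y < Nat.fib (a+1)) : C b y = C a y := by
  induction b with
  | zero =>
    have : a = 0 := by omega
    subst this; rfl
  | succ b ihb =>
    rcases Nat.lt_or_ge a (b+1) with h | h
    · have hb : a ≤ b := by omega
      rw [← ihb hb]
      match b with
      | 0 => rfl
      | (j+1) =>
        rw [C_succ, if_neg, Nat.add_zero]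
        have : Nat.fib (a+1) ≤ Nat.fib (j+2) := Nat.fib_mono (by omega)
        omega
    · have : a = b + 1 := by omega
      subst this; rfl

def u : ℕ → ℕ
  | 0 => 1
  | (i+1) => u i + 2^(2*i+1)

lemma u_arith (i : ℕ) : 3 * u i = 2 * 4 ^ i + 1 := by
  induction i with
  | zero => rfl
  | succ i ih =>
    have h2 : (2:ℕ)^(2*i+1) = 2 * 4 ^ i := by
      rw [pow_succ, pow_mul]; ring
    simp only [u]
    rw [Nat.mul_add, ih, h2, pow_succ]
    ring

lemma chain (n x : ℕ) (hx1 : Nat.fib (n+1) ≤ x) (hx2 : x < Nat.fib (n+3)) :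
    ∀ i, C (n+2*i+2) (Nat.fib (n+2*i+2) + x)
      = 2 ^ n * u i + C (n+1) x + i * C (n+2) x := by
  intro i
  induction i with
  | zero =>
    have hkey := C_succ n (Nat.fib (n+2) + x)
    rw [if_pos (by omega), Nat.add_sub_cancel_left] at hkey
    have hfull : C (n+1) (Nat.fib (n+2) + x) = 2 ^ n := by
      have hadd : Nat.fib (n+3) = Nat.fib (n+1) + Nat.fib (n+2) := Nat.fib_add_two
      have hn1 : Nat.fib (n+1+2) = Nat.fib (n+3) := rfl
      have := C_full (n+1) (Nat.fib (n+2) + x) (by omega)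
      simpa using this
    simp only [Nat.mul_zero, Nat.add_zero, Nat.zero_mul, u]
    rw [show n + 2*0 + 2 = n + 2 by ring, hkey, hfull, Nat.mul_one]
  | succ i ih =>
    have e1 := C_succ (n+2*i+2) (Nat.fib (n+2*i+4) + x)
    rw [show n+2*i+2+2 = n+2*i+4 by ring, show n+2*i+2+1 = n+2*i+3 by ring,
      if_pos (by omega), Nat.add_sub_cancel_left] at e1
    have e2 := C_succ (n+2*i+1) (Nat.fib (n+2*i+4) + x)
    have hmono : Nat.fib (n+2*i+3) ≤ Nat.fib (n+2*i+4) := Nat.fib_mono (by omega)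
    have hadd : Nat.fib (n+2*i+4) = Nat.fib (n+2*i+2) + Nat.fib (n+2*i+3) := Nat.fib_add_two
    rw [show n+2*i+1+2 = n+2*i+3 by ring, show n+2*i+1+1 = n+2*i+2 by ring,
      if_pos (by omega),
      show Nat.fib (n+2*i+4) + x - Nat.fib (n+2*i+3) = Nat.fib (n+2*i+2) + x by omega] at e2
    have hfull : C (n+2*i+2) (Nat.fib (n+2*i+4) + x) = 2 ^ (n+2*i+1) := by
      have hn1 : Nat.fib (n+2*i+2+2) = Nat.fib (n+2*i+4) := rfl
      have := C_full (n+2*i+2) (Nat.fib (n+2*i+4) + x) (by omega)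
      simpa using this
    have hstab : C (n+2*i+3) x = C (n+2) x := by
      apply C_stable (n+2) (n+2*i+3) x (by omega)
      calc x < Nat.fib (n+3) := hx2
        _ = Nat.fib (n+2+1) := rfl
    rw [show n+2*(i+1)+2 = n+2*i+4 by ring, e1, e2, hfull, hstab, ih]
    simp only [u]
    have h2 : (2:ℕ)^(n+2*i+1) = 2^n * 2^(2*i+1) := by rw [← pow_add]; ring_nf
    rw [h2]
    ring

lemma dvd_pow_sub_one (k : ℕ) : (3:ℤ) ∣ 4 ^ k - 1 := by
  induction k with
  | zero => simp
  | succ k ih =>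
    have : (4:ℤ)^(k+1) - 1 = 4 * (4^k - 1) + 3 := by ring
    rw [this]
    exact dvd_add (Dvd.dvd.mul_left ih 4) ⟨1, by ring⟩

lemma u_eq_fInt (t : ℕ) (ht : 1 ≤ t) : (u (t-1) : ℤ) = fInt t := by
  have h3 : (3:ℤ) * (u (t-1) : ℤ) = 2 * 4 ^ (t-1) + 1 := by
    exact_mod_cast congrArg (Nat.cast : ℕ → ℤ) (u_arith (t-1))
  have hdvd : (3:ℤ) ∣ 2 * (4 ^ (t-1) - 1) := Dvd.dvd.mul_left (dvd_pow_sub_one (t-1)) 2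
  have h3' : (3:ℤ) * fInt t = 2 * 4 ^ (t-1) + 1 := by
    rw [fInt, mul_add, Int.mul_ediv_cancel' hdvd]
    ring
  have := h3.trans h3'.symm
  exact mul_left_cancel₀ (by norm_num) this

/-- Lemma 3.3: the elaborate recursion for the summatory function. -/
theorem summatory_super_recursion (t m : ℕ) (ht : 2 ≤ t) (hm : 2 * t ≤ m) (x : ℤ)
    (hx1 : (Nat.fib (m - 2 * t + 1) : ℤ) ≤ x)
    (hx2 : x < (Nat.fib (m - 2 * t + 3) : ℤ)) :
    AZ ((Nat.fib m : ℤ) + x) =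
      (t : ℤ) * AZ x - AZ (x - (Nat.fib (m - 2 * t + 2) : ℤ))
        + fInt t * 2 ^ (m - 2 * t) := by
  set n := m - 2 * t with hn
  have hmn : m = n + 2 * t := by omega
  obtain ⟨i, rfl⟩ : ∃ i, t = i + 2 := ⟨t - 2, by omega⟩
  have hm4 : m = n + 2*i + 4 := by omega
  -- pass to natural numbers
  have hfibpos : (0:ℤ) < Nat.fib (n+1) := by
    exact_mod_cast Nat.fib_pos.mpr (by omega)
  have hx0 : 0 ≤ x := by omega
  set xn := x.toNat with hxn
  have hxz : x = (xn : ℤ) := by omega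
  have hx1n : Nat.fib (n+1) ≤ xn := by omega
  have hx2n : xn < Nat.fib (n+3) := by omega
  -- the key natural-number identity
  have hmain : A (Nat.fib (n+2*i+4) + xn)
      = 2 ^ n * u (i+1) + C (n+1) xn + (i+1) * C (n+2) xn := by
    have hfib1 : Nat.fib (n+3) ≤ Nat.fib (n+2*i+3) := Nat.fib_mono (by omega)
    have hadd : Nat.fib (n+2*i+5) = Nat.fib (n+2*i+3) + Nat.fib (n+2*i+4) := Nat.fib_add_two
    have hrfl : Nat.fib (n+2*i+4+1) = Nat.fib (n+2*i+5) := rfl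
    have hlt : Nat.fib (n+2*i+4) + xn < Nat.fib (n+2*i+4+1) := by omega
    rw [A_eq_C (n+2*i+4) _ (by omega) hlt]
    have := chain n xn hx1n hx2n (i+1)
    rw [show n + 2*(i+1) + 2 = n+2*i+4 by ring] at this
    exact this
  have hfibm : Nat.fib m = Nat.fib (n+2*i+4) := by rw [hm4]
  -- identify the `C` values with `A`/`AZ` values
  have hCx : C (n+2) xn = A xn := by
    rw [A_eq_C (n+2) xn (by omega) (by exact_mod_cast hx2n)]
  have hE : (C (n+1) xn : ℤ) = (A xn : ℤ) - AZ (x - (Nat.fib (n+2) : ℤ)) := by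
    have hsplit := C_succ n xn
    have haddn : Nat.fib (n+3) = Nat.fib (n+1) + Nat.fib (n+2) := Nat.fib_add_two
    by_cases hc : Nat.fib (n+2) ≤ xn
    · rw [if_pos hc] at hsplit
      have hAz : AZ (x - (Nat.fib (n+2) : ℤ)) = (A (xn - Nat.fib (n+2)) : ℤ) := by
        rw [AZ_nonneg _ (by omega)]
        congr 2
        omega
      have hmono21 : Nat.fib (n+1) ≤ Nat.fib (n+2) := Nat.fib_mono (by omega)
      have hfn : Nat.fib (n+1+1) = Nat.fib (n+2) := rfl
      have hsub : C (n+1) (xn - Nat.fib (n+2)) = A (xn - Nat.fib (n+2)) := by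
        rw [A_eq_C (n+1) _ (by omega) (by omega)]
      rw [hAz, ← hCx, hsplit, hsub]
      push_cast
      ring
    · rw [if_neg hc, Nat.add_zero] at hsplit
      have hAz : AZ (x - (Nat.fib (n+2) : ℤ)) = 0 := by
        rw [AZ, if_pos (by omega)]
      rw [hAz, ← hCx, hsplit]
      ring
  -- final assembly
  have hAZ1 : AZ ((Nat.fib m : ℤ) + x) = (A (Nat.fib (n+2*i+4) + xn) : ℤ) := by
    rw [AZ_nonneg _ (by positivity)]
    congr 2
    have : (0:ℤ) ≤ (Nat.fib m : ℤ) := by positivity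
    omega
  have hAZ2 : AZ x = (A xn : ℤ) := by
    rw [AZ_nonneg _ hx0]
  have hu : (u (i+1) : ℤ) = fInt (i+2) := by
    have := u_eq_fInt (i+2) (by omega)
    simpa using this
  rw [hAZ1, hAZ2, hmain]

  push_cast
  rw [hCx] at *
  push_cast at hE ⊢
  rw [show ((C (n+1) xn : ℤ)) = (A xn : ℤ) - AZ (x - (Nat.fib (n+2) : ℤ)) from hE]
  rw [← hu]
  push_cast
  ring
end
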